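/- arXiv:2012.10747 — 6 statements merged into one kernel-verified Lean document; each statement's English description precedes it below -/
import Mathlib

section
/- Let $Z_1,\dots,Z_n$ be independent standard normal random variables and $\lambda_1 \geq \dots \geq \lambda_n > 0$. Let $W_0 = \lambda_1 Z_1^2 + \dots + \lambda_n Z_n^2$, with continuous probability density function $p$ on $(0,\infty)$, and set $M(W_0) = \sup_x p(x)$, $A_1 = \sum_{k=1}^n \lambda_k^2$, $A_2 = \sum_{k=2}^n \lambda_k^2$. Then $M(W_0) \geq \frac{1}{4e^2\sqrt{2\pi}} (A_1 A_2)^{-1/4}$. -/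
open MeasureTheory ProbabilityTheory Real

noncomputable def phi : ℝ → ℝ := fun x => (Real.sqrt (2 * π))⁻¹ * Real.exp (-x ^ 2 / 2)

lemma phi_nonneg (x : ℝ) : 0 ≤ phi x := by
  unfold phi; positivity

lemma gaussianPDFReal_eq_phi (x : ℝ) : gaussianPDFReal 0 1 x = phi x := by
  simp [gaussianPDFReal_def, phi]

lemma gaussianReal_eq_withDensity :
    gaussianReal 0 1 = volume.withDensity (fun x => ENNReal.ofReal (phi x)) := by
  rw [gaussianReal_of_var_ne_zero _ one_ne_zero]
  congr 1
  ext x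
  simp only [gaussianPDF_def, gaussianPDFReal_eq_phi]

lemma integral_gaussianReal_eq (g : ℝ → ℝ) :
    ∫ x, g x ∂(gaussianReal 0 1) = ∫ x, phi x * g x := by
  rw [gaussianReal_eq_withDensity]
  have hmeas : Measurable fun x => (phi x).toNNReal :=
    (measurable_const.mul ((measurable_id.pow_const 2).neg.div_const 2).exp).real_toNNReal
  have hrw : (volume : Measure ℝ).withDensity (fun x => ENNReal.ofReal (phi x))
      = (volume : Measure ℝ).withDensity (fun x => ((phi x).toNNReal : ENNReal)) := rfl
  rw [hrw, integral_withDensity_eq_integral_smul hmeas g]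
  congr 1
  ext x
  simp [NNReal.smul_def, Real.coe_toNNReal _ (phi_nonneg x)]

lemma integrable_pow_mul_exp (q : ℕ) :
    Integrable (fun x : ℝ => x ^ q * Real.exp (-x ^ 2 / 2)) := by
  have h := integrable_rpow_mul_exp_neg_mul_sq (b := 1/2) (by norm_num)
    (s := (q : ℝ)) (by exact lt_of_lt_of_le (by norm_num) (Nat.cast_nonneg q))
  refine h.congr (Filter.Eventually.of_forall fun x => ?_)
  simp only [Real.rpow_natCast]
  ring_nf

lemma key_Ioi (q : ℕ) :
    ∫ x in Set.Ioi (0:ℝ), x ^ q * Real.exp (-x ^ 2 / 2)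
      = (1/2 : ℝ) ^ (-((q:ℝ)+1)/2) * (1/2) * Real.Gamma (((q:ℝ)+1)/2) := by
  rw [← integral_rpow_mul_exp_neg_mul_rpow (p := 2) (q := (q:ℝ)) (b := 1/2)
    (by norm_num) (by exact lt_of_lt_of_le (by norm_num) (Nat.cast_nonneg q)) (by norm_num)]
  refine setIntegral_congr_fun measurableSet_Ioi fun x hx => ?_
  rw [Real.rpow_natCast, Real.rpow_two]
  ring_nf

lemma half_rpow (y : ℝ) : (1/2 : ℝ) ^ (-y) = (2:ℝ) ^ y := by
  rw [one_div, Real.rpow_neg (by norm_num), ← Real.inv_rpow (by norm_num), inv_inv]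


lemma two_rpow_three_halves : (2:ℝ) ^ ((3:ℝ)/2) = 2 * Real.sqrt 2 := by
  rw [show ((3:ℝ)/2) = 1 + 1/2 by norm_num, Real.rpow_add (by norm_num), Real.rpow_one,
    ← Real.sqrt_eq_rpow]

lemma two_rpow_five_halves : (2:ℝ) ^ ((5:ℝ)/2) = 4 * Real.sqrt 2 := by
  rw [show ((5:ℝ)/2) = 2 + 1/2 by norm_num, Real.rpow_add (by norm_num),
    ← Real.sqrt_eq_rpow, show ((2:ℝ) ^ (2:ℝ)) = 4 by
      rw [show ((2:ℝ):ℝ) = ((2:ℕ):ℝ) by norm_num, Real.rpow_natCast]; norm_num]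

lemma gamma_three_halves : Real.Gamma (3/2) = Real.sqrt π / 2 := by
  rw [show (3/2 : ℝ) = 1/2 + 1 by norm_num, Real.Gamma_add_one (by norm_num),
    Real.Gamma_one_half_eq]
  ring

lemma gamma_five_halves : Real.Gamma (5/2) = 3 * Real.sqrt π / 4 := by
  rw [show (5/2 : ℝ) = 3/2 + 1 by norm_num, Real.Gamma_add_one (by norm_num),
    gamma_three_halves]
  ring

lemma integral_sq_exp : ∫ x : ℝ, x ^ 2 * Real.exp (-x ^ 2 / 2) = Real.sqrt (2*π) := by
  have habs : ∀ x : ℝ, |x| ^ 2 * Real.exp (-|x| ^ 2 / 2) = x ^ 2 * Real.exp (-x ^ 2 / 2) := by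
    intro x; rw [sq_abs]
  calc ∫ x : ℝ, x ^ 2 * Real.exp (-x ^ 2 / 2)
      = ∫ x : ℝ, |x| ^ 2 * Real.exp (-|x| ^ 2 / 2) := by
        refine integral_congr_ae (Filter.Eventually.of_forall fun x => (habs x).symm)
    _ = 2 * ∫ x in Set.Ioi (0:ℝ), x ^ 2 * Real.exp (-x ^ 2 / 2) :=
        integral_comp_abs (f := fun y => y ^ 2 * Real.exp (-y ^ 2 / 2))
    _ = Real.sqrt (2*π) := by
        rw [key_Ioi 2]
        norm_num
        rw [half_rpow, two_rpow_three_halves, gamma_three_halves]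
        ring

lemma integral_four_exp : ∫ x : ℝ, x ^ 4 * Real.exp (-x ^ 2 / 2) = 3 * Real.sqrt (2*π) := by
  have habs : ∀ x : ℝ, |x| ^ 4 * Real.exp (-|x| ^ 2 / 2) = x ^ 4 * Real.exp (-x ^ 2 / 2) := by
    intro x
    rw [sq_abs, show |x| ^ 4 = (|x|^2)^2 by ring, sq_abs]
    ring
  calc ∫ x : ℝ, x ^ 4 * Real.exp (-x ^ 2 / 2)
      = ∫ x : ℝ, |x| ^ 4 * Real.exp (-|x| ^ 2 / 2) := by
        refine integral_congr_ae (Filter.Eventually.of_forall fun x => (habs x).symm)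
    _ = 2 * ∫ x in Set.Ioi (0:ℝ), x ^ 4 * Real.exp (-x ^ 2 / 2) :=
        integral_comp_abs (f := fun y => y ^ 4 * Real.exp (-y ^ 2 / 2))
    _ = 3 * Real.sqrt (2*π) := by
        rw [key_Ioi 4]
        norm_num
        rw [half_rpow, two_rpow_five_halves, gamma_five_halves]
        ring

lemma sqrt_two_pi_pos : 0 < Real.sqrt (2*π) := Real.sqrt_pos.2 (by positivity)

lemma integral_pow2_gaussian : ∫ x, x ^ 2 ∂(gaussianReal 0 1) = 1 := by
  rw [integral_gaussianReal_eq]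
  have : ∀ x : ℝ, phi x * x ^ 2 = (Real.sqrt (2*π))⁻¹ * (x ^ 2 * Real.exp (-x ^ 2 / 2)) := by
    intro x; unfold phi; ring
  simp_rw [this]
  rw [integral_const_mul, integral_sq_exp, inv_mul_cancel₀ sqrt_two_pi_pos.ne']

lemma integral_pow4_gaussian : ∫ x, x ^ 4 ∂(gaussianReal 0 1) = 3 := by
  rw [integral_gaussianReal_eq]
  have : ∀ x : ℝ, phi x * x ^ 4 = (Real.sqrt (2*π))⁻¹ * (x ^ 4 * Real.exp (-x ^ 2 / 2)) := by
    intro x; unfold phi; ring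
  simp_rw [this]
  rw [integral_const_mul, integral_four_exp]
  field_simp

lemma integrable_phi : Integrable phi := by
  refine (integrable_gaussianPDFReal 0 1).congr
    (Filter.Eventually.of_forall fun x => gaussianPDFReal_eq_phi x)

lemma small_ball {t : ℝ} (h0 : 0 ≤ t) (h1 : t ≤ 1) :
    ENNReal.ofReal (2 * t * ((Real.sqrt (2*π))⁻¹ * Real.exp (-2⁻¹)))
      ≤ gaussianReal 0 1 (Set.Icc (-t) t) := by
  rw [gaussianReal_apply_eq_integral 0 one_ne_zero]
  apply ENNReal.ofReal_le_ofReal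
  have hvol : (volume (Set.Icc (-t) t)).toReal = 2 * t := by
    rw [Real.volume_Icc, ENNReal.toReal_ofReal (by linarith)]
    ring
  have key := setIntegral_ge_of_const_le (μ := volume) (s := Set.Icc (-t) t)
    (c := (Real.sqrt (2*π))⁻¹ * Real.exp (-2⁻¹))
    (f := gaussianPDFReal 0 1) measurableSet_Icc
    (by rw [Real.volume_Icc]; exact ENNReal.ofReal_ne_top)
    (fun x hx => by
      rw [gaussianPDFReal_eq_phi]
      unfold phi
      have hx2 : x ^ 2 ≤ 1 := by
        have := abs_le.mpr ⟨hx.1, hx.2⟩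
        nlinarith [abs_nonneg x, sq_abs x, abs_le.2 ⟨hx.1, hx.2⟩]
      gcongr
      linarith)
    ((integrable_gaussianPDFReal 0 1).integrableOn)
  rw [measureReal_def, hvol, smul_eq_mul, mul_comm] at key
  calc 2 * t * ((Real.sqrt (2*π))⁻¹ * Real.exp (-2⁻¹))
      = (Real.sqrt (2*π))⁻¹ * Real.exp (-2⁻¹) * (2 * t) := by ring
    _ ≤ _ := key

lemma iIndepFun_ae_congr {Ω ι : Type*} [Countable ι] {mΩ : MeasurableSpace Ω}
    {μ : Measure Ω} {β : ι → Type*} {m : ∀ i, MeasurableSpace (β i)}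
    {f g : ∀ i, Ω → β i} (hf : iIndepFun (m := m) f μ) (h : ∀ i, f i =ᵐ[μ] g i) :
    iIndepFun (m := m) g μ := by
  rw [iIndepFun_iff_measure_inter_preimage_eq_mul] at hf ⊢
  intro S sets hsets
  have hae : ∀ᵐ ω ∂μ, ∀ i, f i ω = g i ω := ae_all_iff.2 h
  have hone : ∀ i (A : Set (β i)), μ (g i ⁻¹' A) = μ (f i ⁻¹' A) := by
    intro i A
    refine measure_congr ?_
    rw [Filter.eventuallyEq_set]
    filter_upwards [h i] with ω hω
    simp [Set.mem_preimage, hω]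
  have h1 : μ (⋂ i ∈ S, g i ⁻¹' sets i) = μ (⋂ i ∈ S, f i ⁻¹' sets i) := by
    refine measure_congr ?_
    rw [Filter.eventuallyEq_set]
    filter_upwards [hae] with ω hω
    simp only [Set.mem_iInter, Set.mem_preimage, hω]
  rw [h1, hf S hsets]
  exact Finset.prod_congr rfl fun i _ => (hone i _).symm

lemma integrable_gaussian_of {g : ℝ → ℝ} (h : Integrable (fun x => phi x * g x)) :
    Integrable g (gaussianReal 0 1) := by
  rw [gaussianReal_eq_withDensity]
  have hmeas : Measurable fun x => (phi x).toNNReal :=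
    (measurable_const.mul ((measurable_id.pow_const 2).neg.div_const 2).exp).real_toNNReal
  have hrw : (volume : Measure ℝ).withDensity (fun x => ENNReal.ofReal (phi x))
      = (volume : Measure ℝ).withDensity (fun x => ((phi x).toNNReal : ENNReal)) := rfl
  rw [hrw, integrable_withDensity_iff_integrable_smul hmeas]
  refine h.congr (Filter.Eventually.of_forall fun x => ?_)
  simp [NNReal.smul_def, Real.coe_toNNReal _ (phi_nonneg x)]

lemma integrable_pow4_gaussian : Integrable (fun x : ℝ => x ^ 4) (gaussianReal 0 1) := by
  refine integrable_gaussian_of ?_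
  have h : Integrable (fun x : ℝ => (Real.sqrt (2*π))⁻¹ * (x ^ 4 * Real.exp (-x ^ 2 / 2))) :=
    (integrable_pow_mul_exp 4).const_mul _
  refine h.congr (Filter.Eventually.of_forall fun x => ?_)
  unfold phi; ring

lemma memLp_mul_sq (c : ℝ) : MemLp (fun x : ℝ => c * x ^ 2) 2 (gaussianReal 0 1) := by
  have hmeas : AEStronglyMeasurable (fun x : ℝ => c * x ^ 2) (gaussianReal 0 1) :=
    (continuous_const.mul (continuous_pow 2)).aestronglyMeasurable
  rw [memLp_two_iff_integrable_sq hmeas]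
  have h := integrable_pow4_gaussian.const_mul (c ^ 2)
  refine h.congr (Filter.Eventually.of_forall fun x => ?_)
  ring

lemma sqrt_two_le : Real.sqrt 2 ≤ 1.5 := by
  rw [show (1.5:ℝ) = Real.sqrt (1.5 ^ 2) from (Real.sqrt_sq (by norm_num)).symm]
  exact Real.sqrt_le_sqrt (by norm_num)

lemma const_ineq :
    1 / (4 * Real.exp 2 * Real.sqrt (2*π)) * (1 + 4 * Real.sqrt 2)
      ≤ (3/2) * ((Real.sqrt (2*π))⁻¹ * Real.exp (-2⁻¹)) := by
  have hS := sqrt_two_pi_pos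
  have he2 : (0:ℝ) < Real.exp 2 := Real.exp_pos 2
  rw [Real.exp_neg]
  have key : (1 + 4 * Real.sqrt 2) * Real.exp 2⁻¹ ≤ (3/2) * (4 * Real.exp 2) := by
    have h1 : Real.exp 2⁻¹ ≤ Real.exp 1 := Real.exp_le_exp.2 (by norm_num)
    have h2 : Real.exp 1 ≤ 2.7182818286 := Real.exp_one_lt_d9.le
    have h3 : (2.7182818283:ℝ) ^ 2 ≤ Real.exp 2 := by
      rw [show (2:ℝ) = 1 + 1 by norm_num, Real.exp_add]
      nlinarith [Real.exp_one_gt_d9.le]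
    nlinarith [sqrt_two_le, Real.sqrt_nonneg 2, Real.exp_pos 2⁻¹]
  have hexp2 : (0:ℝ) < Real.exp 2⁻¹ := Real.exp_pos _
  rw [div_mul_eq_mul_div, one_mul, div_le_iff₀ (by positivity)]
  calc (1 + 4 * Real.sqrt 2)
      = ((1 + 4 * Real.sqrt 2) * Real.exp 2⁻¹) * (Real.exp 2⁻¹)⁻¹ := by
        field_simp
    _ ≤ ((3/2) * (4 * Real.exp 2)) * (Real.exp 2⁻¹)⁻¹ := by
        gcongr
    _ = 3 / 2 * ((√(2 * π))⁻¹ * (Real.exp 2⁻¹)⁻¹) * (4 * Real.exp 2 * √(2 * π)) := by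
        field_simp

set_option maxHeartbeats 1000000 in
theorem aux {Ω : Type*} [MeasureSpace Ω] [IsProbabilityMeasure (ℙ : Measure Ω)]
    {n : ℕ} (hn : 0 < n) (Z : Fin n → Ω → ℝ) (l : Fin n → ℝ)
    (hpos : ∀ k, 0 < l k)
    (hmeasZ : ∀ k, Measurable (Z k))
    (hindep : iIndepFun Z ℙ)
    (hgauss : ∀ k, Measure.map (Z k) ℙ = gaussianReal 0 1)
    (p : ℝ → ℝ)
    (hp_pdf : Measure.map (fun ω => ∑ k, l k * (Z k ω) ^ 2) ℙ
        = volume.withDensity (fun x => ENNReal.ofReal (p x))) :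
    ENNReal.ofReal (1 / (4 * Real.exp 2 * Real.sqrt (2 * π)))
        * ENNReal.ofReal
            ((∑ k, (l k) ^ 2) * ∑ k ∈ Finset.univ.erase ⟨0, hn⟩, (l k) ^ 2)
          ^ (-(1 / 4 : ℝ))
      ≤ ⨆ x : ℝ, ENNReal.ofReal (p x) := by
  classical
  set M := ⨆ x : ℝ, ENNReal.ofReal (p x) with hM
  rcases eq_or_ne M ⊤ with hMtop | hMtop
  · rw [hMtop]; exact le_top
  set c0 : ℝ := 1 / (4 * Real.exp 2 * Real.sqrt (2 * π)) with hc0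
  set c1 : ℝ := (Real.sqrt (2*π))⁻¹ * Real.exp (-2⁻¹) with hc1
  have hc1pos : 0 < c1 := by positivity
  have hc0pos : 0 < c0 := by positivity
  set i0 : Fin n := ⟨0, hn⟩ with hi0
  set s : Finset (Fin n) := Finset.univ.erase i0 with hs
  set X : Fin n → Ω → ℝ := fun k ω => l k * (Z k ω) ^ 2 with hX
  set W : Ω → ℝ := fun ω => ∑ k, X k ω with hW
  set a1 : ℝ := ∑ k, (l k) ^ 2 with ha1
  set a2 : ℝ := ∑ k ∈ s, (l k) ^ 2 with ha2
  have hXnn : ∀ k ω, 0 ≤ X k ω := fun k ω => mul_nonneg (hpos k).le (sq_nonneg _)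
  have hmeasX : ∀ k, Measurable (X k) :=
    fun k => ((hmeasZ k).pow_const 2).const_mul (l k)
  have hmeasW : Measurable W := by
    apply Finset.measurable_sum
    intro k _
    exact hmeasX k
  -- bound via density
  have interval_bound : ∀ u v : ℝ, u ≤ v →
      ℙ (W ⁻¹' Set.Icc u v) ≤ M * ENNReal.ofReal (v - u) := by
    intro u v huv
    have hmap : ℙ (W ⁻¹' Set.Icc u v) = Measure.map W ℙ (Set.Icc u v) :=
      (Measure.map_apply hmeasW measurableSet_Icc).symm
    rw [hmap, show Measure.map W ℙ = volume.withDensity (fun x => ENNReal.ofReal (p x))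
      from hp_pdf, withDensity_apply _ measurableSet_Icc]
    calc ∫⁻ x in Set.Icc u v, ENNReal.ofReal (p x)
        ≤ ∫⁻ _ in Set.Icc u v, M := lintegral_mono fun x => le_iSup (fun y => ENNReal.ofReal (p y)) x
      _ = M * volume (Set.Icc u v) := setLIntegral_const _ _
      _ = M * ENNReal.ofReal (v - u) := by rw [Real.volume_Icc]
  -- small ball for X i0
  have hball : ∀ t : ℝ, 0 ≤ t → t ≤ 1 →
      ENNReal.ofReal (2 * t * c1) ≤ ℙ (X i0 ⁻¹' Set.Icc 0 (l i0 * t ^ 2)) := by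
    intro t h0 h1
    have hset : X i0 ⁻¹' Set.Icc 0 (l i0 * t ^ 2) = Z i0 ⁻¹' Set.Icc (-t) t := by
      ext ω
      simp only [Set.mem_preimage, Set.mem_Icc, hX]
      constructor
      · rintro ⟨-, h2⟩
        have hz2 : (Z i0 ω) ^ 2 ≤ t ^ 2 := le_of_mul_le_mul_left h2 (hpos i0)
        constructor <;> nlinarith
      · rintro ⟨ha, hb⟩
        refine ⟨mul_nonneg (hpos i0).le (sq_nonneg _), ?_⟩
        have : (Z i0 ω) ^ 2 ≤ t ^ 2 := by nlinarith
        exact mul_le_mul_of_nonneg_left this (hpos i0).le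
    rw [hset, ← Measure.map_apply (hmeasZ i0) measurableSet_Icc, hgauss i0]
    exact small_ball h0 h1
  -- moments of X k
  have hXcomp : ∀ k, X k = (fun x => l k * x ^ 2) ∘ Z k := fun k => rfl
  have hmemX : ∀ k, MemLp (X k) 2 ℙ := by
    intro k
    rw [hXcomp k, ← memLp_map_measure_iff ?_ (hmeasZ k).aemeasurable]
    · rw [hgauss k]; exact memLp_mul_sq (l k)
    · rw [hgauss k]
      exact (continuous_const.mul (continuous_pow 2)).aestronglyMeasurable
  have hsm2 : ∀ k, AEStronglyMeasurable (fun x : ℝ => l k * x ^ 2) (Measure.map (Z k) ℙ) := by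
    intro k
    rw [hgauss k]
    exact (continuous_const.mul (continuous_pow 2)).aestronglyMeasurable
  have hEX : ∀ k, ∫ ω, X k ω ∂ℙ = l k := by
    intro k
    have h := integral_map (hmeasZ k).aemeasurable (hsm2 k)
    rw [hgauss k] at h
    have h2 : ∫ x, l k * x ^ 2 ∂(gaussianReal 0 1) = l k := by
      rw [integral_const_mul, integral_pow2_gaussian, mul_one]
    exact h.symm.trans h2
  have hVarX : ∀ k, variance (X k) ℙ = 2 * (l k) ^ 2 := by
    intro k
    rw [variance_eq_sub (hmemX k)]
    have hsq : ∫ ω, (X k ω) ^ 2 ∂ℙ = 3 * (l k) ^ 2 := by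
      have hsm : AEStronglyMeasurable (fun x : ℝ => (l k * x ^ 2) ^ 2) (Measure.map (Z k) ℙ) := by
        rw [hgauss k]
        exact ((continuous_const.mul (continuous_pow 2)).pow 2).aestronglyMeasurable
      have h := integral_map (hmeasZ k).aemeasurable hsm
      rw [hgauss k] at h
      have h2 : ∫ x, (l k * x ^ 2) ^ 2 ∂(gaussianReal 0 1) = 3 * (l k) ^ 2 := by
        have heq : ∫ x, (l k * x ^ 2) ^ 2 ∂(gaussianReal 0 1)
            = ∫ x, (l k) ^ 2 * x ^ 4 ∂(gaussianReal 0 1) := by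
          refine integral_congr_ae (Filter.Eventually.of_forall fun x => ?_)
          ring
        rw [heq, integral_const_mul, integral_pow4_gaussian]
        ring
      exact h.symm.trans h2
    calc (∫ ω, (X k ^ 2) ω ∂ℙ) - (∫ ω, X k ω ∂ℙ) ^ 2
        = (∫ ω, (X k ω) ^ 2 ∂ℙ) - (∫ ω, X k ω ∂ℙ) ^ 2 := by
          congr 1
      _ = 3 * (l k) ^ 2 - (l k) ^ 2 := by rw [hsq, hEX k]
      _ = 2 * (l k) ^ 2 := by ring
  have hindepX : iIndepFun X ℙ := by
    have := hindep.comp (fun k (x : ℝ) => l k * x ^ 2)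
      (fun k => (measurable_id.pow_const 2).const_mul (l k))
    exact this
  have hindepX' : iIndepFun X ℙ := hindepX
  set R : Ω → ℝ := ∑ k ∈ s, X k with hR
  have hRapp : ∀ ω, R ω = ∑ k ∈ s, X k ω := by
    intro ω
    rw [hR, Finset.sum_apply]
  have hmeasR : Measurable R := by
    have h1 : Measurable (fun ω => ∑ k ∈ s, X k ω) := Finset.measurable_sum s (fun k _ => hmeasX k)
    have h2 : R = fun ω => ∑ k ∈ s, X k ω := funext hRapp
    rw [h2]
    exact h1
  have hWRX : ∀ ω, W ω = R ω + X i0 ω := by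
    intro ω
    rw [hRapp]
    show ∑ k, X k ω = ∑ k ∈ s, X k ω + X i0 ω
    rw [hs, ← Finset.sum_erase_add Finset.univ _ (Finset.mem_univ i0)]
  have hmemR : MemLp R 2 ℙ := by
    rw [hR]
    exact memLp_finset_sum' s (fun k _ => hmemX k)
  set m2 : ℝ := ∑ k ∈ s, l k with hm2
  have hER : ∫ ω, R ω ∂ℙ = m2 := by
    have h1 : ∫ ω, R ω ∂ℙ = ∫ ω, ∑ k ∈ s, X k ω ∂ℙ :=
      integral_congr_ae (Filter.Eventually.of_forall hRapp)
    rw [h1, integral_finset_sum s (fun k _ => (hmemX k).integrable one_le_two)]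
    exact Finset.sum_congr rfl fun k _ => hEX k
  have hVarR : variance R ℙ = 2 * a2 := by
    rw [hR, IndepFun.variance_sum (fun k _ => hmemX k)
      (fun i _ j _ hij => hindepX.indepFun hij)]
    rw [ha2, Finset.mul_sum]
    exact Finset.sum_congr rfl fun k _ => hVarX k
  have ha2nn : 0 ≤ a2 := Finset.sum_nonneg fun k _ => sq_nonneg _
  rcases eq_or_lt_of_le ha2nn with ha20 | ha2pos
  · -- degenerate case : a2 = 0, so s = ∅ and W = X i0 ; contradict M ≠ ⊤
    exfalso
    have hsempty : s = ∅ := by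
      by_contra hne
      obtain ⟨k, hk⟩ := Finset.nonempty_iff_ne_empty.2 hne
      have : 0 < a2 := Finset.sum_pos (fun i _ => pow_pos (hpos i) 2) ⟨k, hk⟩
      linarith
    have hWX : ∀ ω, W ω = X i0 ω := by
      intro ω
      rw [hWRX ω, hRapp, hsempty]
      simp
    set m : ℝ := M.toReal with hm
    have hm0 : 0 ≤ m := ENNReal.toReal_nonneg
    have hMre : M = ENNReal.ofReal m := (ENNReal.ofReal_toReal hMtop).symm
    have hli : 0 < l i0 := hpos i0
    have hd : 0 < m * l i0 + 1 := by positivity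
    set t : ℝ := min 1 (c1 / (m * l i0 + 1)) with ht
    have htpos : 0 < t := lt_min one_pos (div_pos hc1pos hd)
    have ht1 : t ≤ 1 := min_le_left _ _
    have htle : t * (m * l i0 + 1) ≤ c1 := by
      have := min_le_right 1 (c1 / (m * l i0 + 1))
      calc t * (m * l i0 + 1) ≤ (c1 / (m * l i0 + 1)) * (m * l i0 + 1) := by
            exact mul_le_mul_of_nonneg_right this hd.le
        _ = c1 := by field_simp
    have hsets : X i0 ⁻¹' Set.Icc 0 (l i0 * t ^ 2) = W ⁻¹' Set.Icc 0 (l i0 * t ^ 2) := by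
      ext ω
      simp [Set.mem_preimage, hWX ω]
    have chain : ENNReal.ofReal (2 * t * c1) ≤ ENNReal.ofReal (m * (l i0 * t ^ 2)) := by
      calc ENNReal.ofReal (2 * t * c1) ≤ ℙ (X i0 ⁻¹' Set.Icc 0 (l i0 * t ^ 2)) :=
            hball t htpos.le ht1
        _ = ℙ (W ⁻¹' Set.Icc 0 (l i0 * t ^ 2)) := by rw [hsets]
        _ ≤ M * ENNReal.ofReal (l i0 * t ^ 2 - 0) := interval_bound 0 _ (by positivity)
        _ = ENNReal.ofReal (m * (l i0 * t ^ 2)) := by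
            rw [hMre, ← ENNReal.ofReal_mul hm0]
            norm_num
    have hreal : 2 * t * c1 ≤ m * (l i0 * t ^ 2) :=
      (ENNReal.ofReal_le_ofReal_iff (by positivity)).1 chain
    nlinarith [mul_pos htpos hc1pos, sq_nonneg t,
      mul_le_mul_of_nonneg_right htle htpos.le]
  · -- main case : a2 > 0
    have ha1a2 : a2 + (l i0) ^ 2 = a1 := by
      rw [ha1, ha2, hs]
      exact Finset.sum_erase_add _ _ (Finset.mem_univ i0)
    have ha1pos : 0 < a1 := by nlinarith [pow_pos (hpos i0) 2]
    have ha2a1 : a2 ≤ a1 := by nlinarith [pow_pos (hpos i0) 2]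
    set t : ℝ := (a2 / a1) ^ ((1:ℝ)/4) with ht
    have htpos : 0 < t := Real.rpow_pos_of_pos (div_pos ha2pos ha1pos) _
    have ht1 : t ≤ 1 :=
      Real.rpow_le_one (by positivity) ((div_le_one ha1pos).2 ha2a1) (by norm_num)
    have ht2 : t ^ 2 = Real.sqrt (a2 / a1) := by
      rw [ht, ← Real.rpow_natCast ((a2 / a1) ^ ((1:ℝ)/4)) 2, ← Real.rpow_mul (by positivity)]
      rw [Real.sqrt_eq_rpow]
      norm_num
    have hsqa1 : Real.sqrt a1 > 0 := Real.sqrt_pos.2 ha1pos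
    have hli0t : l i0 * t ^ 2 ≤ Real.sqrt a2 := by
      have h1 : l i0 ≤ Real.sqrt a1 := by
        rw [show l i0 = Real.sqrt ((l i0) ^ 2) from (Real.sqrt_sq (hpos i0).le).symm]
        exact Real.sqrt_le_sqrt (by nlinarith)
      have h2 : t ^ 2 = Real.sqrt a2 / Real.sqrt a1 := by
        rw [ht2, Real.sqrt_div ha2nn a1]
      rw [h2]
      calc l i0 * (Real.sqrt a2 / Real.sqrt a1)
          ≤ Real.sqrt a1 * (Real.sqrt a2 / Real.sqrt a1) := by
            apply mul_le_mul_of_nonneg_right h1 (by positivity)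
        _ = Real.sqrt a2 := by field_simp
    set δ : ℝ := 2 * Real.sqrt (2 * a2) with hδ
    have hδpos : 0 < δ := by
      have : 0 < Real.sqrt (2 * a2) := Real.sqrt_pos.2 (by linarith)
      linarith
    -- Chebyshev
    have hcheb := meas_ge_le_variance_div_sq (μ := ℙ) hmemR hδpos
    rw [hVarR, hER] at hcheb
    have hqt : 2 * a2 / δ ^ 2 = 1 / 4 := by
      rw [hδ, mul_pow, Real.sq_sqrt (by linarith)]
      field_simp
      ring
    rw [hqt] at hcheb
    have hBevm : MeasurableSet {ω | δ ≤ |R ω - m2|} :=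
      measurableSet_le measurable_const ((hmeasR.sub_const m2).abs)
    have hBc : ENNReal.ofReal (3/4) ≤ ℙ {ω | δ ≤ |R ω - m2|}ᶜ := by
      rw [prob_compl_eq_one_sub hBevm]
      have h34 : (1:ENNReal) - ENNReal.ofReal (1/4) = ENNReal.ofReal (3/4) := by
        rw [← ENNReal.ofReal_one, ← ENNReal.ofReal_sub _ (by norm_num)]
        norm_num
      calc ENNReal.ofReal (3/4) = 1 - ENNReal.ofReal (1/4) := h34.symm
        _ ≤ 1 - ℙ {ω | δ ≤ |R ω - m2|} := tsub_le_tsub_left hcheb 1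
    have hBevc : {ω | δ ≤ |R ω - m2|}ᶜ = R ⁻¹' {x | |x - m2| < δ} := by
      ext ω
      simp [not_le]
    have hsetm : MeasurableSet {x : ℝ | |x - m2| < δ} :=
      measurableSet_lt ((measurable_id.sub_const m2).abs) measurable_const
    have hIndep : IndepFun R (X i0) ℙ := by
      rw [hR]
      exact hindepX.indepFun_finset_sum_of_notMem hmeasX (Finset.notMem_erase i0 Finset.univ)
    have hprod := hIndep.measure_inter_preimage_eq_mul
      {x | |x - m2| < δ} (Set.Icc 0 (l i0 * t ^ 2)) hsetm measurableSet_Icc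
    have hsub : R ⁻¹' {x | |x - m2| < δ} ∩ X i0 ⁻¹' Set.Icc 0 (l i0 * t ^ 2)
        ⊆ W ⁻¹' Set.Icc (m2 - δ) (m2 + l i0 * t ^ 2 + δ) := by
      rintro ω ⟨h1, h2⟩
      simp only [Set.mem_preimage, Set.mem_setOf_eq, Set.mem_Icc] at h1 h2 ⊢
      have habs := abs_lt.1 h1
      rw [hWRX ω]
      exact ⟨by linarith [h2.1, habs.1], by linarith [h2.2, habs.2]⟩
    have mass : ENNReal.ofReal (3/4) * ENNReal.ofReal (2 * t * c1)
        ≤ M * ENNReal.ofReal ((m2 + l i0 * t ^ 2 + δ) - (m2 - δ)) := by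
      calc ENNReal.ofReal (3/4) * ENNReal.ofReal (2 * t * c1)
          ≤ ℙ (R ⁻¹' {x | |x - m2| < δ}) * ℙ (X i0 ⁻¹' Set.Icc 0 (l i0 * t ^ 2)) := by
            refine mul_le_mul' ?_ (hball t htpos.le ht1)
            rw [← hBevc]
            exact hBc
        _ = ℙ (R ⁻¹' {x | |x - m2| < δ} ∩ X i0 ⁻¹' Set.Icc 0 (l i0 * t ^ 2)) := hprod.symm
        _ ≤ ℙ (W ⁻¹' Set.Icc (m2 - δ) (m2 + l i0 * t ^ 2 + δ)) := measure_mono hsub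
        _ ≤ M * ENNReal.ofReal ((m2 + l i0 * t ^ 2 + δ) - (m2 - δ)) :=
            interval_bound _ _ (by nlinarith [sq_nonneg t, (hpos i0).le, mul_nonneg (hpos i0).le (sq_nonneg t)])
    -- final arithmetic
    have hprodpos : 0 < a1 * a2 := mul_pos ha1pos ha2pos
    set r4 : ℝ := (a1 * a2) ^ ((1:ℝ)/4) with hr4
    have hr4pos : 0 < r4 := Real.rpow_pos_of_pos hprodpos _
    have htr4 : t * r4 = Real.sqrt a2 := by
      rw [ht, hr4, ← Real.mul_rpow (by positivity) (by positivity)]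
      have : a2 / a1 * (a1 * a2) = a2 ^ 2 := by
        field_simp [ha1pos.ne']
        try ring
      rw [this, ← Real.rpow_natCast a2 2, ← Real.rpow_mul ha2nn, Real.sqrt_eq_rpow]
      norm_num
    have hlen : l i0 * t ^ 2 + 2 * δ ≤ (1 + 4 * Real.sqrt 2) * Real.sqrt a2 := by
      have hsplit : Real.sqrt (2 * a2) = Real.sqrt 2 * Real.sqrt a2 :=
        Real.sqrt_mul (by norm_num) a2
      rw [hδ, hsplit]
      nlinarith [Real.sqrt_nonneg a2, Real.sqrt_nonneg 2]
    have hkey : (c0 * ((a1 * a2) ^ (-((1:ℝ)/4)))) * (l i0 * t ^ 2 + 2 * δ)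
        ≤ (3/4) * (2 * t * c1) := by
      have hneg : (a1 * a2) ^ (-((1:ℝ)/4)) = r4⁻¹ := by
        rw [hr4, ← Real.rpow_neg hprodpos.le]
      rw [hneg]
      calc (c0 * r4⁻¹) * (l i0 * t ^ 2 + 2 * δ)
          ≤ (c0 * r4⁻¹) * ((1 + 4 * Real.sqrt 2) * Real.sqrt a2) := by
            apply mul_le_mul_of_nonneg_left hlen (mul_nonneg hc0pos.le (inv_nonneg.2 hr4pos.le))
        _ = (c0 * (1 + 4 * Real.sqrt 2)) * (r4⁻¹ * Real.sqrt a2) := by ring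
        _ = (c0 * (1 + 4 * Real.sqrt 2)) * t := by
            rw [← htr4]
            field_simp
        _ ≤ ((3/2) * c1) * t := mul_le_mul_of_nonneg_right const_ineq htpos.le
        _ = (3/4) * (2 * t * c1) := by ring
    have hlenpos : 0 < l i0 * t ^ 2 + 2 * δ := by nlinarith [mul_nonneg (hpos i0).le (sq_nonneg t), hδpos]
    have step : ENNReal.ofReal (c0 * ((a1 * a2) ^ (-((1:ℝ)/4))))
        * ENNReal.ofReal (l i0 * t ^ 2 + 2 * δ)
        ≤ M * ENNReal.ofReal (l i0 * t ^ 2 + 2 * δ) := by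
      calc ENNReal.ofReal (c0 * ((a1 * a2) ^ (-((1:ℝ)/4))))
          * ENNReal.ofReal (l i0 * t ^ 2 + 2 * δ)
          = ENNReal.ofReal ((c0 * ((a1 * a2) ^ (-((1:ℝ)/4)))) * (l i0 * t ^ 2 + 2 * δ)) := by
            rw [← ENNReal.ofReal_mul (mul_nonneg hc0pos.le (Real.rpow_nonneg hprodpos.le _))]
        _ ≤ ENNReal.ofReal ((3/4) * (2 * t * c1)) := ENNReal.ofReal_le_ofReal hkey
        _ = ENNReal.ofReal (3/4) * ENNReal.ofReal (2 * t * c1) := by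
            rw [← ENNReal.ofReal_mul (by norm_num)]
        _ ≤ M * ENNReal.ofReal ((m2 + l i0 * t ^ 2 + δ) - (m2 - δ)) := mass
        _ = M * ENNReal.ofReal (l i0 * t ^ 2 + 2 * δ) := by
            congr 1
            ring_nf
    have hfin : ENNReal.ofReal (c0 * ((a1 * a2) ^ (-((1:ℝ)/4)))) ≤ M :=
      (ENNReal.mul_le_mul_iff_left (by simp [ENNReal.ofReal_eq_zero, not_le, hlenpos]) ENNReal.ofReal_ne_top).1 step
    calc ENNReal.ofReal c0 * ENNReal.ofReal (a1 * a2) ^ (-(1/4 : ℝ))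
        = ENNReal.ofReal c0 * ENNReal.ofReal ((a1 * a2) ^ (-(1/4:ℝ))) := by
          rw [ENNReal.ofReal_rpow_of_pos hprodpos]
      _ = ENNReal.ofReal (c0 * ((a1 * a2) ^ (-((1:ℝ)/4)))) := by
          rw [← ENNReal.ofReal_mul hc0pos.le]
          try norm_num
      _ ≤ M := hfin

/-- Theorem 1 (lower bound): for a weighted sum `W₀ = ∑ λₖ Zₖ²` of squares of
independent standard normals with `λ₁ ≥ ⋯ ≥ λₙ > 0`, the maximum `M(W₀)` of its
continuous density `p` satisfies `M(W₀) ≥ (1/(4e²√(2π))) (A₁ A₂)^{-1/4}`. -/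
theorem max_density_weighted_chi_square_lower
    {Ω : Type*} [MeasureSpace Ω] [IsProbabilityMeasure (ℙ : Measure Ω)]
    {n : ℕ} (hn : 0 < n) (Z : Fin n → Ω → ℝ) (l : Fin n → ℝ)
    (hpos : ∀ k, 0 < l k) (hmono : Antitone l)
    (hindep : iIndepFun Z ℙ)
    (hgauss : ∀ k, Measure.map (Z k) ℙ = gaussianReal 0 1)
    (p : ℝ → ℝ) (hp_nonneg : ∀ x, 0 ≤ p x)
    (hp_zero : ∀ x ≤ 0, p x = 0)
    (hp_cont : ContinuousOn p (Set.Ioi 0))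
    (hp_pdf : Measure.map (fun ω => ∑ k, l k * (Z k ω) ^ 2) ℙ
        = volume.withDensity (fun x => ENNReal.ofReal (p x))) :
    ENNReal.ofReal (1 / (4 * Real.exp 2 * Real.sqrt (2 * π)))
        * ENNReal.ofReal
            ((∑ k, (l k) ^ 2) * ∑ k ∈ Finset.univ.erase ⟨0, hn⟩, (l k) ^ 2)
          ^ (-(1 / 4 : ℝ))
      ≤ ⨆ x : ℝ, ENNReal.ofReal (p x) := by
  have hZae : ∀ k, AEMeasurable (Z k) ℙ := by
    intro k
    by_contra h
    have h0 := Measure.map_of_not_aemeasurable h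
    rw [hgauss k] at h0
    exact (IsProbabilityMeasure.ne_zero (gaussianReal 0 1)) h0
  set Z' : Fin n → Ω → ℝ := fun k => (hZae k).mk (Z k) with hZ'
  have hZ'meas : ∀ k, Measurable (Z' k) := fun k => (hZae k).measurable_mk
  have hZ'ae : ∀ k, Z k =ᵐ[ℙ] Z' k := fun k => (hZae k).ae_eq_mk
  have hindep' : iIndepFun Z' ℙ := iIndepFun_ae_congr hindep hZ'ae
  have hgauss' : ∀ k, Measure.map (Z' k) ℙ = gaussianReal 0 1 := by
    intro k
    rw [← Measure.map_congr (hZ'ae k)]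
    exact hgauss k
  have hpdf' : Measure.map (fun ω => ∑ k, l k * (Z' k ω) ^ 2) ℙ
      = volume.withDensity (fun x => ENNReal.ofReal (p x)) := by
    rw [← hp_pdf]
    apply Measure.map_congr
    filter_upwards [ae_all_iff.2 hZ'ae] with ω hω
    exact (Finset.sum_congr rfl fun k _ => by rw [hω k]).symm
  exact aux hn Z' l hpos hZ'meas hindep' hgauss' p hpdf'
end

section
/- Let $\eta$ be a real random variable with finite variance having a probability density function bounded above by $M(\eta) = \sup_x p_\eta(x)$. Then $M(\eta)^2 \, \mathrm{Var}(\eta) \geq \frac{1}{12}$. -/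
open MeasureTheory ProbabilityTheory Real


lemma aux_sqrt_inv (M : ℝ) (hM : 0 < M) : Real.sqrt (1 / (4 * M ^ 2)) = 1 / (2 * M) := by
  rw [show (1:ℝ) / (4 * M ^ 2) = (1 / (2 * M)) ^ 2 by field_simp; ring]
  exact Real.sqrt_sq (by positivity)

lemma aux_integral (M : ℝ) (hM : 0 < M) :
    ∫ t in Set.Ioc (0:ℝ) (1 / (4 * M ^ 2)), (1 - 2 * M * Real.sqrt t)
      = 1 / (12 * M ^ 2) := by
  have hcpos : (0:ℝ) < 1 / (4 * M ^ 2) := by positivity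
  rw [← intervalIntegral.integral_of_le hcpos.le]
  have hsq : ∫ t in (0:ℝ)..(1 / (4 * M ^ 2)), Real.sqrt t
      = 2 / 3 * (1 / (4 * M ^ 2)) ^ ((3:ℝ)/2) := by
    simp_rw [Real.sqrt_eq_rpow]
    rw [integral_rpow (Or.inl (by norm_num))]
    rw [Real.zero_rpow (by norm_num)]
    ring
  rw [intervalIntegral.integral_sub intervalIntegrable_const
    ((Continuous.intervalIntegrable (by continuity) 0 _).const_mul (2 * M))]
  rw [intervalIntegral.integral_const_mul, hsq, intervalIntegral.integral_const]
  have hc32 : (1 / (4 * M ^ 2) : ℝ) ^ ((3:ℝ)/2)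
      = (1 / (4 * M ^ 2)) * Real.sqrt (1 / (4 * M ^ 2)) := by
    rw [show (3:ℝ)/2 = 1 + 1/2 by norm_num, Real.rpow_add hcpos,
      Real.rpow_one, ← Real.sqrt_eq_rpow]
  rw [hc32, aux_sqrt_inv M hM]
  have hMne : M ≠ 0 := hM.ne'
  field_simp
  ring_nf
  rw [inv_pow, mul_inv_cancel₀ (pow_ne_zero 2 hMne)]
  norm_num

/-- Lemma 1 (Statulyavichus): if a real random variable `η` has finite variance and a
probability density function bounded above, with `M(η) = sup_x p_η(x)`, then
`M(η)² ⋅ Var(η) ≥ 1/12`. -/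
theorem sq_max_density_mul_variance_ge
    {Ω : Type*} [MeasureSpace Ω] [IsProbabilityMeasure (ℙ : Measure Ω)]
    (η : Ω → ℝ) (hL2 : MemLp η 2 ℙ)
    (p : ℝ → ℝ) (hp_nonneg : ∀ x, 0 ≤ p x)
    (hp_pdf : Measure.map η ℙ = volume.withDensity (fun x => ENNReal.ofReal (p x)))
    (hp_bdd : BddAbove (Set.range p)) :
    1 / 12 ≤ (⨆ x : ℝ, p x) ^ 2 * variance η ℙ := by
  set M := ⨆ x : ℝ, p x with hM
  have hη : AEMeasurable η ℙ := hL2.aestronglyMeasurable.aemeasurable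
  have hMx : ∀ x, p x ≤ M := fun x => le_ciSup hp_bdd x
  have hM0 : (0:ℝ) ≤ M := le_trans (hp_nonneg 0) (hMx 0)
  set ν : Measure ℝ := Measure.map η ℙ with hν
  have hνprob : IsProbabilityMeasure ν := Measure.isProbabilityMeasure_map hη
  have hνuniv : ν Set.univ = 1 := hνprob.measure_univ
  have hMpos : (0:ℝ) < M := by
    rcases lt_or_eq_of_le hM0 with h | h
    · exact h
    · exfalso
      have hp0 : ∀ x, p x = 0 := fun x => le_antisymm (h ▸ hMx x) (hp_nonneg x)
      have hν0 : ν = 0 := by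
        rw [hp_pdf]
        have : (fun x => ENNReal.ofReal (p x)) = 0 := by funext x; simp [hp0 x]
        rw [this, withDensity_zero]
      rw [hν0] at hνuniv
      simp at hνuniv
  -- the measure of any interval is at most M times its length
  have hIcc : ∀ a b : ℝ, ν (Set.Icc a b) ≤ ENNReal.ofReal (M * (b - a)) := by
    intro a b
    rw [hp_pdf, withDensity_apply _ measurableSet_Icc]
    calc ∫⁻ x in Set.Icc a b, ENNReal.ofReal (p x)
        ≤ ∫⁻ _ in Set.Icc a b, ENNReal.ofReal M :=
          lintegral_mono fun x => ENNReal.ofReal_le_ofReal (hMx x)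
      _ = ENNReal.ofReal M * volume (Set.Icc a b) := by
          rw [setLIntegral_const]
      _ = ENNReal.ofReal (M * (b - a)) := by
          rw [Real.volume_Icc, ← ENNReal.ofReal_mul hM0]
  set m : ℝ := ∫ ω, η ω ∂ℙ with hm
  -- tail bound
  have htail : ∀ t : ℝ, 0 < t →
      1 - ENNReal.ofReal (2 * M * Real.sqrt t) ≤ ν {a : ℝ | t ≤ (a - m) ^ 2} := by
    intro t ht
    have hS : MeasurableSet {a : ℝ | t ≤ (a - m) ^ 2} :=
      measurableSet_le measurable_const (((measurable_id.sub_const m).pow_const 2))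
    have hsub : {a : ℝ | t ≤ (a - m) ^ 2}ᶜ ⊆ Set.Icc (m - Real.sqrt t) (m + Real.sqrt t) := by
      intro a ha
      simp only [Set.mem_compl_iff, Set.mem_setOf_eq, not_le] at ha
      have h1 : |a - m| ≤ Real.sqrt t := by
        rw [← Real.sqrt_sq_eq_abs]
        exact Real.sqrt_le_sqrt ha.le
      rw [abs_le] at h1
      constructor <;> linarith [h1.1, h1.2]
    have hcompl : ν {a : ℝ | t ≤ (a - m) ^ 2}ᶜ ≤ ENNReal.ofReal (2 * M * Real.sqrt t) := by
      refine le_trans (measure_mono hsub) (le_trans (hIcc _ _) ?_)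
      apply ENNReal.ofReal_le_ofReal
      have : m + Real.sqrt t - (m - Real.sqrt t) = 2 * Real.sqrt t := by ring
      rw [this]
      exact le_of_eq (by ring)
    have hadd : ν {a : ℝ | t ≤ (a - m) ^ 2} + ν {a : ℝ | t ≤ (a - m) ^ 2}ᶜ = 1 := by
      rw [measure_add_measure_compl hS, hνuniv]
    rw [tsub_le_iff_right]
    calc (1:ENNReal) = ν {a : ℝ | t ≤ (a - m) ^ 2} + ν {a : ℝ | t ≤ (a - m) ^ 2}ᶜ := hadd.symm
      _ ≤ ν {a : ℝ | t ≤ (a - m) ^ 2} + ENNReal.ofReal (2 * M * Real.sqrt t) :=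
          add_le_add le_rfl hcompl
  -- identify the (e)variance as a lintegral against ν
  have hev : evariance η ℙ = ∫⁻ t in Set.Ioi (0:ℝ), ν {a : ℝ | t ≤ (a - m) ^ 2} := by
    rw [evariance_eq_lintegral_ofReal]
    have hmap : ∫⁻ x, ENNReal.ofReal ((x - m) ^ 2) ∂ν
        = ∫⁻ ω, ENNReal.ofReal ((η ω - m) ^ 2) ∂ℙ := by
      rw [hν]
      exact lintegral_map' (by fun_prop) hη
    rw [← hm, ← hmap]
    exact lintegral_eq_lintegral_meas_le ν
      (Filter.Eventually.of_forall fun x => sq_nonneg _) (by fun_prop)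
  have hcpos : (0:ℝ) < 1 / (4 * M ^ 2) := by positivity
  have hsqrtc : Real.sqrt (1 / (4 * M ^ 2)) = 1 / (2 * M) := aux_sqrt_inv M hMpos
  -- the key lower bound on the evariance
  have hkey : ENNReal.ofReal (1 / (12 * M ^ 2)) ≤ evariance η ℙ := by
    rw [hev]
    have h1 : ∫⁻ t in Set.Ioc (0:ℝ) (1 / (4 * M ^ 2)), ν {a : ℝ | t ≤ (a - m) ^ 2}
        ≤ ∫⁻ t in Set.Ioi (0:ℝ), ν {a : ℝ | t ≤ (a - m) ^ 2} :=
      lintegral_mono_set fun t ht => ht.1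
    refine le_trans ?_ h1
    have h2 : ∫⁻ t in Set.Ioc (0:ℝ) (1 / (4 * M ^ 2)), ENNReal.ofReal (1 - 2 * M * Real.sqrt t)
        ≤ ∫⁻ t in Set.Ioc (0:ℝ) (1 / (4 * M ^ 2)), ν {a : ℝ | t ≤ (a - m) ^ 2} := by
      refine lintegral_mono_ae ?_
      filter_upwards [ae_restrict_mem measurableSet_Ioc] with t ht
      refine le_trans (le_of_eq ?_) (htail t ht.1)
      rw [ENNReal.ofReal_sub _ (by positivity), ENNReal.ofReal_one]
    refine le_trans ?_ h2
    have hint : IntegrableOn (fun t : ℝ => 1 - 2 * M * Real.sqrt t) (Set.Ioc 0 (1 / (4 * M ^ 2))) volume := by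
      apply Continuous.integrableOn_Ioc
      continuity
    have hnn : 0 ≤ᵐ[volume.restrict (Set.Ioc (0:ℝ) (1 / (4 * M ^ 2)))]
        fun t : ℝ => 1 - 2 * M * Real.sqrt t := by
      filter_upwards [ae_restrict_mem measurableSet_Ioc] with t ht
      have h3 : Real.sqrt t ≤ Real.sqrt (1 / (4 * M ^ 2)) := Real.sqrt_le_sqrt ht.2
      rw [hsqrtc] at h3
      have : 2 * M * Real.sqrt t ≤ 2 * M * (1 / (2 * M)) :=
        mul_le_mul_of_nonneg_left h3 (by positivity)
      have h4 : 2 * M * (1 / (2 * M)) = 1 := by field_simp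
      simp only [Pi.zero_apply]
      linarith
    rw [← ofReal_integral_eq_lintegral_ofReal hint hnn]
    apply ENNReal.ofReal_le_ofReal
    rw [aux_integral M hMpos]
  -- conclude
  have hvar : 1 / (12 * M ^ 2) ≤ variance η ℙ := by
    rw [← hL2.ofReal_variance_eq] at hkey
    exact (ENNReal.ofReal_le_ofReal_iff (variance_nonneg _ _)).mp hkey
  calc (1:ℝ) / 12 = M ^ 2 * (1 / (12 * M ^ 2)) := by field_simp
    _ ≤ M ^ 2 * variance η ℙ := mul_le_mul_of_nonneg_left hvar (by positivity)
end

section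
/- Let $Z_1,\dots,Z_n$ be independent standard normal random variables and $\alpha_1,\dots,\alpha_n > 0$ with $\alpha_1^2 + \dots + \alpha_n^2 = 1$. Let $m$ be a positive integer with $\alpha_k^2 \leq 1/m$ for all $k$. Then the characteristic function $f(t) = \mathbb{E}\, e^{itW}$ of $W = \alpha_1 Z_1^2 + \dots + \alpha_n Z_n^2$ satisfies $|f(t)| \leq (1 + 4t^2/m)^{-m/4}$ for all $t \in \mathbb{R}$. -/
open MeasureTheory ProbabilityTheory Real
open scoped ENNReal NNReal


lemma gauss_charfun_norm (s : ℝ) :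
    ‖∫ x : ℝ, Complex.exp (Complex.I * (s : ℂ) * (x : ℂ) ^ 2) ∂(gaussianReal 0 1)‖
      = (1 + 4 * s ^ 2) ^ (-(1/4 : ℝ)) := by
  set b : ℂ := 1/2 - s * Complex.I with hb
  have hbre : 0 < b.re := by simp [hb]
  have h1 : gaussianReal 0 1 = volume.withDensity (fun x => ((gaussianPDFReal 0 1 x).toNNReal : ℝ≥0∞)) := by
    rw [gaussianReal_of_var_ne_zero 0 one_ne_zero]
    rfl
  rw [h1, integral_withDensity_eq_integral_smul ((measurable_gaussianPDFReal 0 1).real_toNNReal)]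
  have h2 : ∀ x : ℝ, ((gaussianPDFReal 0 1 x).toNNReal : ℝ≥0) • Complex.exp (Complex.I * (s : ℂ) * (x : ℂ) ^ 2)
      = (((√(2 * π))⁻¹ : ℝ) : ℂ) * Complex.exp (-b * (x:ℂ) ^ 2) := by
    intro x
    rw [NNReal.smul_def, Real.coe_toNNReal _ (gaussianPDFReal_nonneg 0 1 x)]
    have hpdf : gaussianPDFReal 0 1 x = (√(2 * π))⁻¹ * Real.exp (-(x^2)/2) := by
      simp only [gaussianPDFReal]
      norm_num
    rw [hpdf, Complex.real_smul]
    push_cast [Complex.ofReal_exp]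
    rw [mul_assoc, ← Complex.exp_add]
    rw [hb]; ring_nf
  simp_rw [h2]
  rw [integral_const_mul, integral_gaussian_complex hbre]
  rw [norm_mul]
  have hb0 : ‖b‖ = Real.sqrt (1/4 + s^2) := by
    rw [Complex.norm_def]
    congr 1
    simp [hb, Complex.normSq_apply]
    ring
  have hcpow : ‖(↑π / b) ^ (1/2 : ℂ)‖ = (π / Real.sqrt (1/4 + s^2)) ^ (1/2 : ℝ) := by
    have : ((1/2 : ℂ)) = (((1/2 : ℝ)) : ℂ) := by norm_num
    rw [this, Complex.norm_cpow_real, norm_div, Complex.norm_real, Real.norm_eq_abs,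
      abs_of_pos Real.pi_pos, hb0]
  rw [hcpow, Complex.norm_real, Real.norm_eq_abs, abs_of_nonneg (by positivity)]
  -- now pure real computation
  have hA : (0:ℝ) < 1 + 4 * s ^ 2 := by positivity
  have h4 : (1/4 + s^2 : ℝ) = (1 + 4*s^2)/4 := by ring
  have hs4 : Real.sqrt (1/4 + s^2) = Real.sqrt (1 + 4*s^2) / 2 := by
    rw [h4, show ((1 + 4*s^2)/4 : ℝ) = (1 + 4*s^2) * (1/2)^2 by ring, Real.sqrt_mul hA.le,
      Real.sqrt_sq (by norm_num : (0:ℝ) ≤ 1/2)]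
    ring
  rw [hs4]
  have hdd : π / (Real.sqrt (1 + 4*s^2) / 2) = 2 * π / Real.sqrt (1 + 4*s^2) := by
    field_simp
  rw [hdd, Real.div_rpow (by positivity) (Real.sqrt_nonneg _), Real.sqrt_eq_rpow (1 + 4*s^2),
    ← Real.rpow_mul hA.le, Real.sqrt_eq_rpow (2*π)]
  rw [show (1/2 * (1/2) : ℝ) = 1/4 by norm_num, Real.rpow_neg hA.le]
  have h2pi : ((2*π) ^ (1/2 : ℝ) : ℝ) ≠ 0 := by positivity
  have h14 : ((1 + 4*s^2 : ℝ) ^ (1/4 : ℝ)) ≠ 0 := by positivity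
  field_simp

lemma prod_rpow_bound {n m : ℕ} (α : Fin n → ℝ) (hm : 0 < m)
    (hnorm : ∑ k, (α k) ^ 2 = 1) (hαm : ∀ k, (α k) ^ 2 ≤ 1 / m) {c : ℝ} (hc : 0 ≤ c) :
    ∏ k, (1 + c * (α k) ^ 2) ^ (-(1/4 : ℝ)) ≤ (1 + c / m) ^ (-(m / 4 : ℝ)) := by
  have hm' : (0:ℝ) < m := by exact_mod_cast hm
  have hbpos : (0:ℝ) < 1 + c / m := by positivity
  have hfpos : ∀ k, (0:ℝ) < 1 + c * (α k) ^ 2 := fun k => by positivity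
  -- key pointwise bound
  have key : ∀ k, (1 + c / m) ^ ((m : ℝ) * (α k) ^ 2) ≤ 1 + c * (α k) ^ 2 := by
    intro k
    have h1 : (0:ℝ) ≤ (m : ℝ) * (α k) ^ 2 := by positivity
    have h2 : (m : ℝ) * (α k) ^ 2 ≤ 1 := by
      have := hαm k
      rw [le_div_iff₀ hm'] at this
      linarith [this]
    have := rpow_one_add_le_one_add_mul_self (s := c / m) (le_trans (by norm_num : (-1:ℝ) ≤ 0) (by positivity)) h1 h2
    calc (1 + c / m) ^ ((m : ℝ) * (α k) ^ 2) ≤ 1 + (m : ℝ) * (α k) ^ 2 * (c / m) := this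
      _ = 1 + c * (α k) ^ 2 := by field_simp
  -- product lower bound
  have hprod : (1 + c / m) ^ (m : ℝ) ≤ ∏ k, (1 + c * (α k) ^ 2) := by
    have hsum : ∑ k, (m : ℝ) * (α k) ^ 2 = (m : ℝ) := by
      rw [← Finset.mul_sum, hnorm, mul_one]
    have hrw : (1 + c / m) ^ (m : ℝ) = ∏ k, (1 + c / m) ^ ((m : ℝ) * (α k) ^ 2) := by
      have h0 : (1 + c / m) ^ (m : ℝ) = (1 + c / m) ^ (∑ k, (m : ℝ) * (α k) ^ 2) := by rw [hsum]
      rw [h0, Real.rpow_def_of_pos hbpos, Finset.mul_sum, Real.exp_sum]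
      exact Finset.prod_congr rfl fun k _ => (Real.rpow_def_of_pos hbpos _).symm
    rw [hrw]
    exact Finset.prod_le_prod (fun k _ => (Real.rpow_pos_of_pos hbpos _).le) fun k _ => key k
  have h1 : ∏ k, (1 + c * (α k) ^ 2) ^ (-(1/4 : ℝ))
      = (∏ k, (1 + c * (α k) ^ 2)) ^ (-(1/4 : ℝ)) :=
    Real.finset_prod_rpow _ _ (fun k _ => (hfpos k).le) _
  rw [h1]
  calc (∏ k, (1 + c * (α k) ^ 2)) ^ (-(1/4 : ℝ))
      ≤ ((1 + c / m) ^ (m : ℝ)) ^ (-(1/4 : ℝ)) :=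
        Real.rpow_le_rpow_of_nonpos (Real.rpow_pos_of_pos hbpos _) hprod (by norm_num)
    _ = (1 + c / m) ^ (-(m / 4 : ℝ)) := by
        rw [← Real.rpow_mul hbpos.le]
        norm_num
        ring_nf

lemma pi_integral_prod {n : ℕ} (μ : Measure ℝ) [IsProbabilityMeasure μ] (f : Fin n → ℝ → ℂ) :
    ∫ x : Fin n → ℝ, ∏ k, f k (x k) ∂(Measure.pi fun _ => μ) = ∏ k, ∫ x, f k x ∂μ := by
  letI : MeasureSpace ℝ := ⟨μ⟩
  exact MeasureTheory.integral_fintype_prod_eq_prod f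

lemma map_tuple_eq_pi {Ω : Type*} [MeasureSpace Ω] [IsProbabilityMeasure (ℙ : Measure Ω)]
    {n : ℕ} (Y : Fin n → Ω → ℝ) (hYm : ∀ k, Measurable (Y k))
    (hindep : iIndepFun Y ℙ)
    (hgauss : ∀ k, Measure.map (Y k) ℙ = gaussianReal 0 1) :
    Measure.map (fun ω k => Y k ω) ℙ = Measure.pi fun _ => gaussianReal 0 1 := by
  have hT : Measurable (fun ω k => Y k ω) := measurable_pi_lambda _ hYm
  refine (Measure.pi_eq fun s hs => ?_).symm
  rw [Measure.map_apply hT (MeasurableSet.univ_pi hs)]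
  have hpre : (fun ω k => Y k ω) ⁻¹' (Set.univ.pi s) = ⋂ k, Y k ⁻¹' s k := by
    ext ω; simp [Set.mem_univ_pi, Set.mem_iInter]
  rw [hpre]
  have := hindep.measure_inter_preimage_eq_mul Finset.univ (sets := s) (fun i _ => hs i)
  simp only [Finset.mem_univ, Set.iInter_true, Set.iInter_iInter_eq_left] at this
  rw [this]
  exact Finset.prod_congr rfl fun k _ => by
    rw [← hgauss k, Measure.map_apply (hYm k) (hs k)]

/-- Lemma 3: if `α₁² + ⋯ + αₙ² = 1` and `αₖ² ≤ 1/m`, then the characteristic function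
`f(t) = 𝔼 exp(itW)` of `W = ∑ αₖ Zₖ²` satisfies `|f(t)| ≤ (1 + 4t²/m)^{-m/4}`. -/
theorem charFun_weighted_chi_square_bound
    {Ω : Type*} [MeasureSpace Ω] [IsProbabilityMeasure (ℙ : Measure Ω)]
    {n : ℕ} (Z : Fin n → Ω → ℝ) (α : Fin n → ℝ)
    (hpos : ∀ k, 0 < α k) (hnorm : ∑ k, (α k) ^ 2 = 1)
    (hindep : iIndepFun Z ℙ)
    (hgauss : ∀ k, Measure.map (Z k) ℙ = gaussianReal 0 1)
    (m : ℕ) (hm : 0 < m) (hαm : ∀ k, (α k) ^ 2 ≤ 1 / m) :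
    ∀ t : ℝ,
      ‖∫ ω, Complex.exp (Complex.I * (t * ∑ k, α k * (Z k ω) ^ 2 : ℝ)) ∂ℙ‖
        ≤ (1 + 4 * t ^ 2 / m) ^ (-(m / 4 : ℝ)) := by
  intro t
  have hZm : ∀ k, AEMeasurable (Z k) ℙ := fun k =>
    aemeasurable_of_map_neZero (by rw [hgauss k]; infer_instance)
  set Y : Fin n → Ω → ℝ := fun k => (hZm k).mk (Z k) with hYdef
  have hYm : ∀ k, Measurable (Y k) := fun k => (hZm k).measurable_mk
  have hYeq : ∀ k, Z k =ᵐ[ℙ] Y k := fun k => (hZm k).ae_eq_mk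
  have hae : ∀ᵐ ω ∂ℙ, ∀ k, Z k ω = Y k ω := by
    rw [ae_all_iff]; exact hYeq
  have hYgauss : ∀ k, Measure.map (Y k) ℙ = gaussianReal 0 1 := fun k => by
    rw [← Measure.map_congr (hYeq k)]; exact hgauss k
  have hYindep : iIndepFun Y ℙ := by
    rw [iIndepFun_iff_measure_inter_preimage_eq_mul] at hindep ⊢
    intro S sets hsets
    have h1 : ℙ (⋂ i ∈ S, Y i ⁻¹' sets i) = ℙ (⋂ i ∈ S, Z i ⁻¹' sets i) := by
      apply measure_congr
      rw [Filter.eventuallyEq_set]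
      filter_upwards [hae] with ω hω
      simp only [Set.mem_iInter, Set.mem_preimage]
      constructor
      · intro h i hi; rw [hω i]; exact h i hi
      · intro h i hi; rw [← hω i]; exact h i hi
    rw [h1, hindep S hsets]
    refine Finset.prod_congr rfl fun i _ => measure_congr ?_
    rw [Filter.eventuallyEq_set]
    filter_upwards [hYeq i] with ω hω
    simp [Set.mem_preimage, hω]
  have hint : ∫ ω, Complex.exp (Complex.I * (t * ∑ k, α k * (Z k ω) ^ 2 : ℝ)) ∂ℙ
      = ∫ ω, Complex.exp (Complex.I * (t * ∑ k, α k * (Y k ω) ^ 2 : ℝ)) ∂ℙ := by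
    refine integral_congr_ae ?_
    filter_upwards [hae] with ω hω
    have : ∑ k, α k * (Z k ω) ^ 2 = ∑ k, α k * (Y k ω) ^ 2 :=
      Finset.sum_congr rfl fun k _ => by rw [hω k]
    rw [this]
  set g : Fin n → ℝ → ℂ := fun k x => Complex.exp (Complex.I * ((t * α k : ℝ) : ℂ) * (x : ℂ) ^ 2)
    with hgdef
  have hexp : ∀ ω, Complex.exp (Complex.I * ((t * ∑ k, α k * (Y k ω) ^ 2 : ℝ) : ℂ))
      = ∏ k, g k (Y k ω) := by
    intro ω
    rw [hgdef, ← Complex.exp_sum]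
    congr 1
    push_cast
    rw [Finset.mul_sum, Finset.mul_sum]
    exact Finset.sum_congr rfl fun k _ => by ring
  have hT : Measurable (fun ω k => Y k ω) := measurable_pi_lambda _ hYm
  have hgc : ∀ k, Continuous (g k) := by
    intro k
    rw [hgdef]
    exact Complex.continuous_exp.comp
      (continuous_const.mul ((Complex.continuous_ofReal).pow 2))
  have hFc : Continuous (fun x : Fin n → ℝ => ∏ k, g k (x k)) :=
    continuous_finset_prod _ fun k _ => (hgc k).comp (continuous_apply k)
  have hmap : ∫ ω, ∏ k, g k (Y k ω) ∂ℙ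
      = ∫ x : Fin n → ℝ, ∏ k, g k (x k) ∂(Measure.map (fun ω k => Y k ω) ℙ) := by
    rw [integral_map hT.aemeasurable hFc.aestronglyMeasurable]
  rw [hint]
  simp_rw [hexp]
  rw [hmap, map_tuple_eq_pi Y hYm hYindep hYgauss, pi_integral_prod, norm_prod]
  have hfac : ∀ k, ‖∫ x, g k x ∂(gaussianReal 0 1)‖ = (1 + (4 * t ^ 2) * (α k) ^ 2) ^ (-(1/4 : ℝ)) := by
    intro k
    rw [hgdef]
    rw [gauss_charfun_norm (t * α k)]
    congr 1
    ring
  calc ∏ k, ‖∫ x, g k x ∂(gaussianReal 0 1)‖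
      = ∏ k, (1 + (4 * t ^ 2) * (α k) ^ 2) ^ (-(1/4 : ℝ)) :=
        Finset.prod_congr rfl fun k _ => hfac k
    _ ≤ (1 + 4 * t ^ 2 / m) ^ (-(m / 4 : ℝ)) :=
        prod_rpow_bound α hm hnorm hαm (by positivity)
end

section
/- Let $m, n$ be positive integers with $m \leq n$, and let $t \in \mathbb{R}$ be fixed. Then for all $b_1,\dots,b_n$ with $0 \leq b_k \leq 1/m$ for each $k$ and $b_1 + \dots + b_n = 1$, one has $\sum_{k=1}^n \log(1 + 4 b_k t^2) \geq m \log(1 + 4t^2/m)$. -/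
open Real

lemma pointwise_log_ge {m : ℕ} (hm : 0 < m) (t : ℝ) {x : ℝ} (hx0 : 0 ≤ x)
    (hx1 : x ≤ 1 / m) : x * m * Real.log (1 + 4 * t ^ 2 / m) ≤ Real.log (1 + 4 * x * t ^ 2) := by
  have hm' : (0:ℝ) < m := by exact_mod_cast hm
  have hbase : (0:ℝ) < 1 + 4 * t ^ 2 / m := by positivity
  have hp0 : 0 ≤ x * m := by positivity
  have hp1 : x * m ≤ 1 := by
    rw [div_eq_mul_inv] at hx1
    calc x * m ≤ (1 * (↑m)⁻¹) * m := by nlinarith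
    _ = 1 := by field_simp
  have hs : (-1:ℝ) ≤ 4 * t ^ 2 / m := le_trans (by norm_num) (by positivity : (0:ℝ) ≤ 4 * t ^ 2 / m)
  have hbern := rpow_one_add_le_one_add_mul_self hs hp0 hp1
  have key : (1 + 4 * t ^ 2 / m) ^ (x * m : ℝ) ≤ 1 + 4 * x * t ^ 2 := by
    calc (1 + 4 * t ^ 2 / m) ^ (x * m : ℝ) ≤ 1 + (x * m) * (4 * t ^ 2 / m) := hbern
    _ = 1 + 4 * x * t ^ 2 := by field_simp
  calc x * m * Real.log (1 + 4 * t ^ 2 / m)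
      = Real.log ((1 + 4 * t ^ 2 / m) ^ (x * m : ℝ)) := (Real.log_rpow hbase _).symm
    _ ≤ Real.log (1 + 4 * x * t ^ 2) :=
        Real.log_le_log (by positivity) key

/-- The concave function `V(b) = ∑ log(1 + 4 bₖ t²)` attains its minimum over the
polytope `Qₘ = {0 ≤ bₖ ≤ 1/m, ∑ bₖ = 1}` at an extreme point, giving
`∑ log(1 + 4 bₖ t²) ≥ m log(1 + 4t²/m)`. -/
theorem sum_log_ge_extreme_point
    {m n : ℕ} (hm : 0 < m) (hmn : m ≤ n) (t : ℝ) (b : Fin n → ℝ)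
    (hb0 : ∀ k, 0 ≤ b k) (hb1 : ∀ k, b k ≤ 1 / m) (hsum : ∑ k, b k = 1) :
    m * Real.log (1 + 4 * t ^ 2 / m) ≤ ∑ k, Real.log (1 + 4 * b k * t ^ 2) := by
  have h : ∑ k, b k * m * Real.log (1 + 4 * t ^ 2 / m)
      ≤ ∑ k, Real.log (1 + 4 * b k * t ^ 2) :=
    Finset.sum_le_sum fun k _ => pointwise_log_ge hm t (hb0 k) (hb1 k)
  calc (m : ℝ) * Real.log (1 + 4 * t ^ 2 / m)
      = ∑ k, b k * m * Real.log (1 + 4 * t ^ 2 / m) := by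
        rw [← Finset.sum_mul, ← Finset.sum_mul, hsum, one_mul]
    _ ≤ _ := h
end

section
/- Let $Z_1,\dots,Z_n$ be independent standard normal random variables, $\lambda_1 \geq \dots \geq \lambda_n > 0$ with $\sum_{k=1}^n \lambda_k^2 = 1$ and $\lambda_1^2 \leq 1/3$, and $a_1,\dots,a_n \in \mathbb{R}$. Then the characteristic function $f(t) = \mathbb{E}\, e^{itW_a}$ of $W_a = \sum_{k=1}^n \lambda_k (Z_k - a_k)^2$ satisfies, for all $t \in \mathbb{R}$, $|f(t)| \leq (1 + t^2)^{-3/4} \exp\!\Big\{-2\sum_{k=1}^n a_k^2 \frac{\lambda_k^2 t^2}{1 + 4\lambda_k^2 t^2}\Big\}$. -/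
open MeasureTheory ProbabilityTheory Real

open scoped ENNReal NNReal

section Helpers

variable {Ω : Type*} {mΩ : MeasurableSpace Ω} {μ : Measure Ω}

lemma my_integrable_of_bounded [IsProbabilityMeasure μ] {E : Type*} [NormedAddCommGroup E]
    {f : Ω → E} (hf : AEStronglyMeasurable f μ) (hb : ∀ ω, ‖f ω‖ ≤ 1) :
    Integrable f μ :=
  Integrable.mono' (integrable_const 1) hf (Filter.Eventually.of_forall hb)

lemma my_indepFun_integral_mul_complex [IsProbabilityMeasure μ] {X Y : Ω → ℂ}
    (h : IndepFun X Y μ) (hX : AEStronglyMeasurable X μ) (hY : AEStronglyMeasurable Y μ)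
    (hXb : ∀ ω, ‖X ω‖ ≤ 1) (hYb : ∀ ω, ‖Y ω‖ ≤ 1) :
    ∫ ω, X ω * Y ω ∂μ = (∫ ω, X ω ∂μ) * ∫ ω, Y ω ∂μ := by
  have hXre : AEStronglyMeasurable (fun ω => (X ω).re) μ :=
    Complex.continuous_re.comp_aestronglyMeasurable hX
  have hXim : AEStronglyMeasurable (fun ω => (X ω).im) μ :=
    Complex.continuous_im.comp_aestronglyMeasurable hX
  have hYre : AEStronglyMeasurable (fun ω => (Y ω).re) μ :=
    Complex.continuous_re.comp_aestronglyMeasurable hY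
  have hYim : AEStronglyMeasurable (fun ω => (Y ω).im) μ :=
    Complex.continuous_im.comp_aestronglyMeasurable hY
  have hXbre : ∀ ω, ‖(X ω).re‖ ≤ 1 := fun ω => le_trans (by
      rw [Real.norm_eq_abs]; exact Complex.abs_re_le_norm _) (hXb ω)
  have hXbim : ∀ ω, ‖(X ω).im‖ ≤ 1 := fun ω => le_trans (by
      rw [Real.norm_eq_abs]; exact Complex.abs_im_le_norm _) (hXb ω)
  have hYbre : ∀ ω, ‖(Y ω).re‖ ≤ 1 := fun ω => le_trans (by
      rw [Real.norm_eq_abs]; exact Complex.abs_re_le_norm _) (hYb ω)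
  have hYbim : ∀ ω, ‖(Y ω).im‖ ≤ 1 := fun ω => le_trans (by
      rw [Real.norm_eq_abs]; exact Complex.abs_im_le_norm _) (hYb ω)
  have hXi : Integrable X μ := my_integrable_of_bounded hX hXb
  have hYi : Integrable Y μ := my_integrable_of_bounded hY hYb
  have hXYi : Integrable (fun ω => X ω * Y ω) μ :=
    my_integrable_of_bounded (hX.mul hY) (fun ω => by
      rw [norm_mul]
      calc ‖X ω‖ * ‖Y ω‖ ≤ 1 * 1 := by
            exact mul_le_mul (hXb ω) (hYb ω) (norm_nonneg _) zero_le_one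
        _ = 1 := by norm_num)
  have irr : IndepFun (fun ω => (X ω).re) (fun ω => (Y ω).re) μ :=
    h.comp Complex.measurable_re Complex.measurable_re
  have iri : IndepFun (fun ω => (X ω).re) (fun ω => (Y ω).im) μ :=
    h.comp Complex.measurable_re Complex.measurable_im
  have iir : IndepFun (fun ω => (X ω).im) (fun ω => (Y ω).re) μ :=
    h.comp Complex.measurable_im Complex.measurable_re
  have iii : IndepFun (fun ω => (X ω).im) (fun ω => (Y ω).im) μ :=
    h.comp Complex.measurable_im Complex.measurable_im
  have e_rr := irr.integral_fun_mul_eq_mul_integral hXre hYre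
  have e_ri := iri.integral_fun_mul_eq_mul_integral hXre hYim
  have e_ir := iir.integral_fun_mul_eq_mul_integral hXim hYre
  have e_ii := iii.integral_fun_mul_eq_mul_integral hXim hYim
  have int_rr : Integrable (fun ω => (X ω).re * (Y ω).re) μ :=
    my_integrable_of_bounded (hXre.mul hYre) (fun ω => by
      rw [norm_mul]
      exact mul_le_one₀ (hXbre ω) (norm_nonneg _) (hYbre ω))
  have int_ri : Integrable (fun ω => (X ω).re * (Y ω).im) μ :=
    my_integrable_of_bounded (hXre.mul hYim) (fun ω => by
      rw [norm_mul]
      exact mul_le_one₀ (hXbre ω) (norm_nonneg _) (hYbim ω))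
  have int_ir : Integrable (fun ω => (X ω).im * (Y ω).re) μ :=
    my_integrable_of_bounded (hXim.mul hYre) (fun ω => by
      rw [norm_mul]
      exact mul_le_one₀ (hXbim ω) (norm_nonneg _) (hYbre ω))
  have int_ii : Integrable (fun ω => (X ω).im * (Y ω).im) μ :=
    my_integrable_of_bounded (hXim.mul hYim) (fun ω => by
      rw [norm_mul]
      exact mul_le_one₀ (hXbim ω) (norm_nonneg _) (hYbim ω))
  have eXre : ∫ ω, (X ω).re ∂μ = (∫ ω, X ω ∂μ).re := integral_re hXi
  have eXim : ∫ ω, (X ω).im ∂μ = (∫ ω, X ω ∂μ).im := integral_im hXi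
  have eYre : ∫ ω, (Y ω).re ∂μ = (∫ ω, Y ω ∂μ).re := integral_re hYi
  have eYim : ∫ ω, (Y ω).im ∂μ = (∫ ω, Y ω ∂μ).im := integral_im hYi
  apply Complex.ext
  · have h1 : (∫ ω, X ω * Y ω ∂μ).re = ∫ ω, (X ω * Y ω).re ∂μ := (integral_re hXYi).symm
    rw [h1]
    have h2 : ∀ ω, (X ω * Y ω).re = (X ω).re * (Y ω).re - (X ω).im * (Y ω).im :=
      fun ω => Complex.mul_re _ _
    rw [integral_congr_ae (Filter.Eventually.of_forall h2), integral_sub int_rr int_ii]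
    rw [e_rr, e_ii, Complex.mul_re, eXre, eXim, eYre, eYim]
  · have h1 : (∫ ω, X ω * Y ω ∂μ).im = ∫ ω, (X ω * Y ω).im ∂μ := (integral_im hXYi).symm
    rw [h1]
    have h2 : ∀ ω, (X ω * Y ω).im = (X ω).re * (Y ω).im + (X ω).im * (Y ω).re :=
      fun ω => Complex.mul_im _ _
    rw [integral_congr_ae (Filter.Eventually.of_forall h2), integral_add int_ri int_ir]
    rw [e_ri, e_ir, Complex.mul_im, eXre, eXim, eYre, eYim]

lemma my_iIndepFun_congr {ι : Type*} {β : ι → Type*} {m : ∀ i, MeasurableSpace (β i)}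
    {f g : ∀ i, Ω → β i} (h : iIndepFun f μ) (h' : ∀ i, f i =ᵐ[μ] g i) :
    iIndepFun g μ := by
  rw [iIndepFun_iff_measure_inter_preimage_eq_mul] at h ⊢
  intro S sets hsets
  have hall : ∀ᵐ ω ∂μ, ∀ i ∈ S, f i ω = g i ω :=
    (Filter.eventually_all_finset S).2 fun i _ => h' i
  have hset : (⋂ i ∈ S, g i ⁻¹' sets i : Set Ω) =ᵐ[μ] (⋂ i ∈ S, f i ⁻¹' sets i) := by
    rw [Filter.eventuallyEq_set]
    filter_upwards [hall] with ω hω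
    simp only [Set.mem_iInter, Set.mem_preimage]
    constructor
    · intro hmem i hi; rw [hω i hi]; exact hmem i hi
    · intro hmem i hi; rw [← hω i hi]; exact hmem i hi
  rw [measure_congr hset, h S hsets]
  refine Finset.prod_congr rfl fun i hi => ?_
  refine measure_congr ?_
  rw [Filter.eventuallyEq_set]
  filter_upwards [h' i] with ω hω
  simp [Set.mem_preimage, hω]

lemma my_prod_integral {n : ℕ} [IsProbabilityMeasure μ] (Y : Fin n → Ω → ℂ)
    (hmeas : ∀ k, Measurable (Y k)) (hb : ∀ k ω, ‖Y k ω‖ ≤ 1)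
    (hindep : iIndepFun Y μ) (s : Finset (Fin n)) :
    ∫ ω, ∏ k ∈ s, Y k ω ∂μ = ∏ k ∈ s, ∫ ω, Y k ω ∂μ := by
  classical
  induction s using Finset.induction_on with
  | empty => simp
  | insert i s hi ih =>
    have hprodmeas : Measurable (fun ω => ∏ k ∈ s, Y k ω) :=
      Finset.measurable_prod s fun k _ => hmeas k
    have hprodb : ∀ ω, ‖∏ k ∈ s, Y k ω‖ ≤ 1 := fun ω => by
      rw [norm_prod]
      exact Finset.prod_le_one (fun k _ => norm_nonneg _) (fun k _ => hb k ω)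
    have hid : IndepFun (∏ j ∈ s, Y j) (Y i) μ :=
      hindep.indepFun_finset_prod_of_notMem hmeas hi
    have hideq : (∏ j ∈ s, Y j) = fun ω => ∏ k ∈ s, Y k ω := by
      funext ω; simp [Finset.prod_apply]
    rw [hideq] at hid
    have key := my_indepFun_integral_mul_complex hid.symm
      (hmeas i).aestronglyMeasurable hprodmeas.aestronglyMeasurable
      (fun ω => hb i ω) hprodb
    rw [show (fun ω => ∏ k ∈ insert i s, Y k ω) = fun ω => Y i ω * ∏ k ∈ s, Y k ω from
      funext fun ω => Finset.prod_insert hi]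
    rw [Finset.prod_insert hi, key, ih]

lemma my_prod_lower {n : ℕ} (l : Fin n → ℝ) (u : ℝ) (hu : 0 ≤ u)
    (hle : ∀ k, (l k)^2 ≤ 1/3) (hnorm : ∑ k, (l k)^2 = 1) :
    (1 + u) ^ (3:ℝ) ≤ ∏ k, (1 + 4 * (l k)^2 * u) := by
  have key : ∀ k, (1 + 4*u/3) ^ ((3:ℝ) * (l k)^2) ≤ 1 + 4 * (l k)^2 * u := by
    intro k
    have h1 : (-1:ℝ) ≤ 4*u/3 := by linarith
    have h2 : (0:ℝ) ≤ 3 * (l k)^2 := by positivity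
    have h3 : (3:ℝ) * (l k)^2 ≤ 1 := by linarith [hle k]
    calc (1 + 4*u/3) ^ ((3:ℝ) * (l k)^2) ≤ 1 + (3 * (l k)^2) * (4*u/3) :=
          rpow_one_add_le_one_add_mul_self h1 h2 h3
      _ = 1 + 4 * (l k)^2 * u := by ring
  calc (1 + u) ^ (3:ℝ) ≤ (1 + 4*u/3) ^ (3:ℝ) := by
        apply Real.rpow_le_rpow (by linarith) (by linarith) (by norm_num)
    _ = (1 + 4*u/3) ^ ((3:ℝ) * ∑ k, (l k)^2) := by rw [hnorm, mul_one]
    _ = ∏ k, (1 + 4*u/3) ^ ((3:ℝ) * (l k)^2) := by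
        rw [Finset.mul_sum, Real.rpow_sum_of_pos (by linarith) _ _]
    _ ≤ ∏ k, (1 + 4 * (l k)^2 * u) := by
        apply Finset.prod_le_prod
        · intro k _; positivity
        · intro k _; exact key k

lemma my_norm_cexp_re (r s : ℝ) : ‖Complex.exp ((r:ℂ) + (s:ℂ) * Complex.I)‖ = Real.exp r := by
  rw [Complex.norm_exp]
  simp

lemma my_gauss_int (c a : ℝ) :
    ∫ x : ℝ, Complex.exp (Complex.I * ((c * (x - a) ^ 2 : ℝ) : ℂ)) ∂(gaussianReal 0 1)
      = ((Real.sqrt (2 * π))⁻¹ : ℝ) •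
        ((↑π / -(Complex.I * c - 1/2)) ^ (1/2 : ℂ) *
          Complex.exp (Complex.I * c * a^2
            - (-2 * Complex.I * c * a)^2 / (4 * (Complex.I * c - 1/2)))) := by
  have h1 : gaussianReal 0 1 = volume.withDensity (gaussianPDF 0 1) :=
    gaussianReal_of_var_ne_zero 0 one_ne_zero
  rw [h1]
  have h2 : (gaussianPDF 0 1 : ℝ → ℝ≥0∞)
      = fun x => ((Real.toNNReal (gaussianPDFReal 0 1 x) : ℝ≥0) : ℝ≥0∞) := by
    ext x; rfl
  rw [h2, integral_withDensity_eq_integral_smul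
    ((measurable_gaussianPDFReal 0 1).real_toNNReal) _]
  have h3 : ∀ x : ℝ, (Real.toNNReal (gaussianPDFReal 0 1 x) : ℝ≥0)
      • Complex.exp (Complex.I * ((c * (x - a) ^ 2 : ℝ) : ℂ))
      = ((Real.sqrt (2 * π))⁻¹ : ℝ) •
        Complex.exp ((Complex.I * c - 1/2) * x^2 + (-2 * Complex.I * c * a) * x
          + Complex.I * c * a^2) := by
    intro x
    have hpdf : gaussianPDFReal 0 1 x = (Real.sqrt (2 * π))⁻¹ * Real.exp (-x^2/2) := by
      simp [gaussianPDFReal]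
    have hnn : (0:ℝ) ≤ gaussianPDFReal 0 1 x := gaussianPDFReal_nonneg 0 1 x
    rw [NNReal.smul_def, Real.coe_toNNReal _ hnn, hpdf]
    have : ((Real.exp (-x^2/2) : ℝ) : ℂ) * Complex.exp (Complex.I * ((c * (x - a) ^ 2 : ℝ) : ℂ))
        = Complex.exp ((Complex.I * c - 1/2) * x^2 + (-2 * Complex.I * c * a) * x
          + Complex.I * c * a^2) := by
      rw [Complex.ofReal_exp, ← Complex.exp_add]
      congr 1
      push_cast
      ring
    rw [mul_smul, ← this]
    simp [smul_eq_mul]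
  simp_rw [h3]
  rw [integral_smul]
  congr 1
  exact integral_cexp_quadratic (by simp : (Complex.I * c - 1/2).re < 0)
    (-2 * Complex.I * c * a) (Complex.I * c * a^2)

lemma my_gauss_norm (c a : ℝ) :
    ‖∫ x : ℝ, Complex.exp (Complex.I * ((c * (x - a) ^ 2 : ℝ) : ℂ)) ∂(gaussianReal 0 1)‖
      = (1 + 4*c^2) ^ (-(1/4:ℝ)) * Real.exp (-2 * (a^2 * (c^2 / (1 + 4*c^2)))) := by
  rw [my_gauss_int]
  have hq : (0:ℝ) < 1 + 4*c^2 := by positivity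
  have hden : (Complex.I * c - 1/2) ≠ 0 := by
    intro h
    have := congrArg Complex.re h
    simp at this
  have hD : ((4:ℂ) * (Complex.I * c - 1/2)) ≠ 0 := mul_ne_zero (by norm_num) hden
  have hq' : ((1:ℂ) + 4*(c:ℂ)^2) ≠ 0 := by
    have h : ((1:ℂ) + 4*(c:ℂ)^2) = ((1 + 4*c^2 : ℝ) : ℂ) := by push_cast; ring
    rw [h]
    exact_mod_cast hq.ne'
  have hfrac : (-2 * Complex.I * c * a)^2 / (4 * (Complex.I * c - 1/2))
      = Complex.I * c * a^2 - (((-2 * (a^2 * (c^2 / (1 + 4*c^2))) : ℝ) : ℂ)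
          + ((a^2*c/(1+4*c^2) : ℝ) : ℂ) * Complex.I) := by
    rw [div_eq_iff hD]
    push_cast
    field_simp
    ring_nf
    simp [Complex.I_sq]
    have hq'' : (1:ℂ) + (c:ℂ)^2*4 ≠ 0 := by rw [add_comm, mul_comm, add_comm]; exact hq'
    linear_combination (Complex.I * c * a^2 * 4) * (inv_mul_cancel₀ hq'')
  have hE : Complex.I * c * a^2 - (-2 * Complex.I * c * a)^2 / (4 * (Complex.I * c - 1/2))
      = ((-2 * (a^2 * (c^2 / (1 + 4*c^2))) : ℝ) : ℂ)
          + ((a^2*c/(1+4*c^2) : ℝ) : ℂ) * Complex.I := by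
    rw [hfrac]; ring
  rw [hE, norm_smul, norm_mul, my_norm_cexp_re]
  have habs : ‖(↑π / -(Complex.I * c - 1/2))‖ = 2 * π / Real.sqrt (1 + 4*c^2) := by
    rw [norm_div, Complex.norm_real, Real.norm_eq_abs, abs_of_pos Real.pi_pos]
    have h1 : ‖(-(Complex.I * ↑c - 1/2))‖ = Real.sqrt (1 + 4*c^2) / 2 := by
      rw [Complex.norm_def]
      have h2 : Complex.normSq (-(Complex.I * ↑c - 1/2)) = (1 + 4*c^2)/4 := by
        simp [Complex.normSq_apply]
        ring
      rw [h2, show (1+4*c^2)/4 = (Real.sqrt (1+4*c^2)/2)^2 from by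
        rw [div_pow, Real.sq_sqrt hq.le]; norm_num,
        Real.sqrt_sq (by positivity)]
    rw [h1, div_div_eq_mul_div]
    ring_nf
  have hcpow : ‖(↑π / -(Complex.I * c - 1/2)) ^ (1/2 : ℂ)‖
      = (1 + 4*c^2) ^ (-(1/4:ℝ)) * Real.sqrt (2*π) := by
    have h12 : ((1/2 : ℂ)) = (((1/2 : ℝ)) : ℂ) := by norm_num
    nth_rewrite 2 [h12]
    rw [Complex.norm_cpow_real, habs]
    rw [Real.div_rpow (by positivity) (Real.sqrt_nonneg _)]
    rw [Real.sqrt_eq_rpow (1 + 4*c^2), ← Real.rpow_mul hq.le]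
    rw [show (1:ℝ)/2 * (1/2) = (1/4 : ℝ) by norm_num]
    rw [Real.rpow_neg hq.le, Real.sqrt_eq_rpow]
    have : (0:ℝ) < (1+4*c^2) ^ ((1:ℝ)/4) := Real.rpow_pos_of_pos hq _
    field_simp
  rw [hcpow, Real.norm_of_nonneg (by positivity)]
  have h2pi : (0:ℝ) < Real.sqrt (2*π) := Real.sqrt_pos.2 (by positivity)
  field_simp

end Helpers

/-- If `λ₁ ≥ ⋯ ≥ λₙ > 0`, `∑ λₖ² = 1` and `λ₁² ≤ 1/3`, then the characteristic function
of `W_a = ∑ λₖ (Zₖ - aₖ)²` satisfies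
`|f(t)| ≤ (1 + t²)^{-3/4} exp(-2 ∑ aₖ² λₖ² t²/(1 + 4λₖ² t²))`. -/
theorem charFun_noncentral_weighted_chi_square_bound
    {Ω : Type*} [MeasureSpace Ω] [IsProbabilityMeasure (ℙ : Measure Ω)]
    {n : ℕ} (hn : 0 < n) (Z : Fin n → Ω → ℝ) (l : Fin n → ℝ) (a : Fin n → ℝ)
    (hpos : ∀ k, 0 < l k) (hmono : Antitone l)
    (hnorm : ∑ k, (l k) ^ 2 = 1) (hl1 : (l ⟨0, hn⟩) ^ 2 ≤ 1 / 3)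
    (hindep : iIndepFun Z ℙ)
    (hgauss : ∀ k, Measure.map (Z k) ℙ = gaussianReal 0 1) :
    ∀ t : ℝ,
      ‖∫ ω, Complex.exp (Complex.I * (t * ∑ k, l k * (Z k ω - a k) ^ 2 : ℝ)) ∂ℙ‖
        ≤ (1 + t ^ 2) ^ (-(3 / 4 : ℝ))
            * Real.exp (-2 * ∑ k, (a k) ^ 2
                * ((l k) ^ 2 * t ^ 2 / (1 + 4 * (l k) ^ 2 * t ^ 2))) := by
  intro t
  classical
  -- a.e.-measurability of the `Z k`
  have hZae : ∀ k, AEMeasurable (Z k) ℙ := by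
    intro k
    by_contra h
    have hg := hgauss k
    rw [Measure.map_of_not_aemeasurable h] at hg
    have h1 : (gaussianReal 0 1 : Measure ℝ) Set.univ = 1 := measure_univ
    rw [← hg] at h1
    simp at h1
  -- measurable modifications
  set Z' : Fin n → Ω → ℝ := fun k => (hZae k).mk (Z k) with hZ'def
  have hZ'meas : ∀ k, Measurable (Z' k) := fun k => (hZae k).measurable_mk
  have hZ'ae : ∀ k, Z k =ᵐ[ℙ] Z' k := fun k => (hZae k).ae_eq_mk
  have hZ'gauss : ∀ k, Measure.map (Z' k) ℙ = gaussianReal 0 1 := fun k => by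
    rw [← Measure.map_congr (hZ'ae k)]; exact hgauss k
  have hindep' : iIndepFun Z' ℙ := my_iIndepFun_congr hindep hZ'ae
  -- the factor random variables
  set Y : Fin n → Ω → ℂ :=
    fun k ω => Complex.exp (Complex.I * ((t * l k * (Z' k ω - a k) ^ 2 : ℝ) : ℂ)) with hYdef
  have hφcont : ∀ k, Continuous (fun x : ℝ =>
      Complex.exp (Complex.I * ((t * l k * (x - a k) ^ 2 : ℝ) : ℂ))) := by
    intro k
    apply Complex.continuous_exp.comp
    apply Continuous.mul continuous_const
    exact Complex.continuous_ofReal.comp (by continuity)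
  have hφmeas : ∀ k, Measurable (fun x : ℝ =>
      Complex.exp (Complex.I * ((t * l k * (x - a k) ^ 2 : ℝ) : ℂ))) :=
    fun k => (hφcont k).measurable
  have hYmeas : ∀ k, Measurable (Y k) := fun k => (hφmeas k).comp (hZ'meas k)
  have hunit : ∀ r : ℝ, ‖Complex.exp (Complex.I * (r:ℂ))‖ = 1 := by
    intro r
    rw [Complex.norm_exp, Complex.mul_re]
    simp
  have hYb : ∀ k ω, ‖Y k ω‖ ≤ 1 := fun k ω => le_of_eq (hunit _)
  have hYindep : iIndepFun Y ℙ :=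
    hindep'.comp (fun k x => Complex.exp (Complex.I * ((t * l k * (x - a k) ^ 2 : ℝ) : ℂ)))
      hφmeas
  -- rewrite the integral as an integral of a product
  have hinteq : ∫ ω, Complex.exp (Complex.I * ((t * ∑ k, l k * (Z k ω - a k) ^ 2 : ℝ) : ℂ)) ∂ℙ
      = ∫ ω, ∏ k, Y k ω ∂ℙ := by
    apply integral_congr_ae
    have hall : ∀ᵐ ω ∂ℙ, ∀ k, Z k ω = Z' k ω := (ae_all_iff).2 hZ'ae
    filter_upwards [hall] with ω hω
    rw [hYdef]
    rw [← Complex.exp_sum]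
    congr 1
    simp only [hω]
    push_cast
    rw [Finset.mul_sum, Finset.mul_sum]
    apply Finset.sum_congr rfl
    intro k _
    ring
  rw [hinteq, my_prod_integral Y hYmeas hYb hYindep Finset.univ, norm_prod]
  -- per-coordinate computation
  have hcoord : ∀ k, ∫ ω, Y k ω ∂ℙ
      = ∫ x, Complex.exp (Complex.I * ((t * l k * (x - a k) ^ 2 : ℝ) : ℂ))
          ∂(gaussianReal 0 1) := by
    intro k
    rw [← hZ'gauss k,
      integral_map (hZ'meas k).aemeasurable (hφmeas k).aestronglyMeasurable]
  have hnormk : ∀ k, ‖∫ ω, Y k ω ∂ℙ‖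
      = (1 + 4 * (l k)^2 * t^2) ^ (-(1/4:ℝ))
        * Real.exp (-2 * ((a k)^2 * ((l k)^2 * t^2 / (1 + 4 * (l k)^2 * t^2)))) := by
    intro k
    have e1 : (1:ℝ) + 4*(t * l k)^2 = 1 + 4 * (l k)^2 * t^2 := by ring
    have e2 : -2 * ((a k)^2 * ((t * l k)^2 / (1 + 4*(t * l k)^2)))
        = -2 * ((a k)^2 * ((l k)^2 * t^2 / (1 + 4 * (l k)^2 * t^2))) := by
      rw [e1]; ring
    rw [hcoord k, my_gauss_norm (t * l k) (a k), e2, e1]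
  rw [Finset.prod_congr rfl (fun k _ => hnormk k), Finset.prod_mul_distrib]
  have hexp : ∏ k, Real.exp (-2 * ((a k)^2 * ((l k)^2 * t^2 / (1 + 4 * (l k)^2 * t^2))))
      = Real.exp (-2 * ∑ k, (a k) ^ 2 * ((l k) ^ 2 * t ^ 2 / (1 + 4 * (l k) ^ 2 * t ^ 2))) := by
    rw [← Real.exp_sum]
    congr 1
    rw [Finset.mul_sum]
  rw [hexp]
  have hqpos : ∀ k, (0:ℝ) < 1 + 4 * (l k)^2 * t^2 := fun k => by positivity
  have hrpow : ∏ k, (1 + 4 * (l k)^2 * t^2) ^ (-(1/4:ℝ))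
      = (∏ k, (1 + 4 * (l k)^2 * t^2)) ^ (-(1/4:ℝ)) :=
    Real.finset_prod_rpow Finset.univ _ (fun k _ => (hqpos k).le) _
  rw [hrpow]
  have hle : ∀ k, (l k)^2 ≤ 1/3 := by
    intro k
    refine le_trans ?_ hl1
    have h0k : (⟨0, hn⟩ : Fin n) ≤ k := Fin.mk_le_of_le_val (Nat.zero_le _)
    have := hmono h0k
    exact pow_le_pow_left₀ (hpos k).le this 2
  have hprod : (1 + t^2) ^ (3:ℝ) ≤ ∏ k, (1 + 4 * (l k)^2 * t^2) :=
    my_prod_lower l (t^2) (sq_nonneg t) hle hnorm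
  have h1 : (∏ k, (1 + 4 * (l k)^2 * t^2)) ^ (-(1/4:ℝ))
      ≤ ((1 + t^2) ^ (3:ℝ)) ^ (-(1/4:ℝ)) :=
    Real.rpow_le_rpow_of_nonpos (Real.rpow_pos_of_pos (by positivity) _) hprod (by norm_num)
  have h2 : ((1 + t^2) ^ (3:ℝ)) ^ (-(1/4:ℝ)) = (1 + t^2) ^ (-(3/4:ℝ)) := by
    rw [← Real.rpow_mul (by positivity)]
    norm_num
  exact mul_le_mul_of_nonneg_right (h1.trans_eq h2) (Real.exp_nonneg _)
end

section
/- For every $B \geq 0$, the integral $I(B) = \int_0^\infty (1 + t^2)^{-3/4} e^{-B t^2} \, dt$ satisfies $I(B) \leq \frac{3\sqrt{2}}{\sqrt{1 + B}}$. -/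
open MeasureTheory Real

lemma aux_g_le_one (t : ℝ) : (1 + t ^ 2) ^ (-(3 / 4 : ℝ)) ≤ 1 :=
  Real.rpow_le_one_of_one_le_of_nonpos (by nlinarith [sq_nonneg t]) (by norm_num)

lemma aux_g_nonneg (t : ℝ) : 0 ≤ (1 + t ^ 2) ^ (-(3 / 4 : ℝ)) :=
  Real.rpow_nonneg (by nlinarith [sq_nonneg t]) _

lemma aux_g_le_rpow {t : ℝ} (ht : 0 < t) :
    (1 + t ^ 2) ^ (-(3 / 4 : ℝ)) ≤ t ^ (-(3 / 2 : ℝ)) := by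
  have h1 : (1 + t ^ 2) ^ (-(3 / 4 : ℝ)) ≤ (t ^ 2) ^ (-(3 / 4 : ℝ)) :=
    Real.rpow_le_rpow_of_nonpos (by positivity) (by nlinarith) (by norm_num)
  have h2 : (t ^ 2) ^ (-(3 / 4 : ℝ)) = t ^ (-(3 / 2 : ℝ)) := by
    rw [← Real.rpow_natCast t 2, ← Real.rpow_mul ht.le]
    norm_num
  linarith

lemma aux_g_integrable :
    IntegrableOn (fun t : ℝ => (1 + t ^ 2) ^ (-(3 / 4 : ℝ))) (Set.Ioi 0) := by
  have hcont : Continuous fun t : ℝ => (1 + t ^ 2) ^ (-(3 / 4 : ℝ)) := by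
    apply Continuous.rpow_const (by continuity)
    intro x; left; nlinarith [sq_nonneg x]
  have h1 : IntegrableOn (fun t : ℝ => (1 + t ^ 2) ^ (-(3 / 4 : ℝ))) (Set.Ioc 0 1) :=
    (hcont.integrableOn_Icc (a := 0) (b := 1)).mono_set Set.Ioc_subset_Icc_self
  have h2 : IntegrableOn (fun t : ℝ => (1 + t ^ 2) ^ (-(3 / 4 : ℝ))) (Set.Ioi 1) := by
    refine Integrable.mono (integrableOn_Ioi_rpow_of_lt (by norm_num : (-(3/2 : ℝ)) < -1)
      one_pos) ?_ ?_
    · exact (hcont.aestronglyMeasurable).restrict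
    · filter_upwards [ae_restrict_mem measurableSet_Ioi] with t ht
      rw [Real.norm_eq_abs, Real.norm_eq_abs, abs_of_nonneg (aux_g_nonneg t),
        abs_of_nonneg (Real.rpow_nonneg (by linarith [Set.mem_Ioi.mp ht]) _)]
      exact aux_g_le_rpow (lt_trans one_pos (Set.mem_Ioi.mp ht))
  have : Set.Ioi (0:ℝ) = Set.Ioc 0 1 ∪ Set.Ioi 1 := (Set.Ioc_union_Ioi_eq_Ioi (by norm_num)).symm
  rw [this]
  exact h1.union h2

lemma aux_g_integral_le :
    (∫ t in Set.Ioi (0 : ℝ), (1 + t ^ 2) ^ (-(3 / 4 : ℝ))) ≤ 3 := by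
  have hsplit : Set.Ioi (0:ℝ) = Set.Ioc 0 1 ∪ Set.Ioi 1 :=
    (Set.Ioc_union_Ioi_eq_Ioi (by norm_num)).symm
  have h1 : IntegrableOn (fun t : ℝ => (1 + t ^ 2) ^ (-(3 / 4 : ℝ))) (Set.Ioc 0 1) :=
    aux_g_integrable.mono_set (by rw [hsplit]; exact Set.subset_union_left)
  have h2 : IntegrableOn (fun t : ℝ => (1 + t ^ 2) ^ (-(3 / 4 : ℝ))) (Set.Ioi 1) :=
    aux_g_integrable.mono_set (by rw [hsplit]; exact Set.subset_union_right)
  have heq : (∫ t in Set.Ioi (0 : ℝ), (1 + t ^ 2) ^ (-(3 / 4 : ℝ)))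
      = (∫ t in Set.Ioc (0:ℝ) 1, (1 + t ^ 2) ^ (-(3 / 4 : ℝ)))
        + ∫ t in Set.Ioi (1:ℝ), (1 + t ^ 2) ^ (-(3 / 4 : ℝ)) := by
    rw [hsplit]
    exact setIntegral_union (by simp) measurableSet_Ioi h1 h2
  have hb1 : (∫ t in Set.Ioc (0:ℝ) 1, (1 + t ^ 2) ^ (-(3 / 4 : ℝ))) ≤ 1 := by
    calc (∫ t in Set.Ioc (0:ℝ) 1, (1 + t ^ 2) ^ (-(3 / 4 : ℝ)))
        ≤ ∫ _ in Set.Ioc (0:ℝ) 1, (1:ℝ) := by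
          apply setIntegral_mono_on h1 (integrableOn_const (by simp)) measurableSet_Ioc
          intro t _; exact aux_g_le_one t
      _ = 1 := by simp
  have hb2 : (∫ t in Set.Ioi (1:ℝ), (1 + t ^ 2) ^ (-(3 / 4 : ℝ))) ≤ 2 := by
    have hint : IntegrableOn (fun t : ℝ => t ^ (-(3/2 : ℝ))) (Set.Ioi 1) :=
      integrableOn_Ioi_rpow_of_lt (by norm_num) one_pos
    calc (∫ t in Set.Ioi (1:ℝ), (1 + t ^ 2) ^ (-(3 / 4 : ℝ)))
        ≤ ∫ t in Set.Ioi (1:ℝ), t ^ (-(3/2 : ℝ)) := by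
          apply setIntegral_mono_on h2 hint measurableSet_Ioi
          intro t ht; exact aux_g_le_rpow (lt_trans one_pos ht)
      _ = 2 := by
          rw [integral_Ioi_rpow_of_lt (by norm_num) one_pos]; norm_num
  linarith

/-- For every `B ≥ 0`, `I(B) = ∫₀^∞ (1 + t²)^{-3/4} e^{-Bt²} dt ≤ 3√2/√(1 + B)`. -/
theorem integral_bound_I
    (B : ℝ) (hB : 0 ≤ B) :
    (∫ t in Set.Ioi (0 : ℝ), (1 + t ^ 2) ^ (-(3 / 4 : ℝ)) * Real.exp (-B * t ^ 2))
      ≤ 3 * Real.sqrt 2 / Real.sqrt (1 + B) := by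
  have hnonneg : 0 ≤ᵐ[volume.restrict (Set.Ioi (0:ℝ))]
      fun t => (1 + t ^ 2) ^ (-(3 / 4 : ℝ)) * Real.exp (-B * t ^ 2) := by
    filter_upwards with t
    exact mul_nonneg (aux_g_nonneg t) (Real.exp_nonneg _)
  rcases le_or_gt B 1 with hB1 | hB1
  · -- small B: bound by ∫ g ≤ 3 ≤ RHS
    have hle : (∫ t in Set.Ioi (0 : ℝ), (1 + t ^ 2) ^ (-(3 / 4 : ℝ)) * Real.exp (-B * t ^ 2))
        ≤ ∫ t in Set.Ioi (0 : ℝ), (1 + t ^ 2) ^ (-(3 / 4 : ℝ)) := by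
      apply integral_mono_of_nonneg hnonneg aux_g_integrable
      filter_upwards with t
      have : Real.exp (-B * t ^ 2) ≤ 1 := by
        rw [Real.exp_le_one_iff]
        nlinarith [sq_nonneg t]
      nlinarith [aux_g_nonneg t, Real.exp_nonneg (-B * t ^ 2)]
    have h3 : (3:ℝ) ≤ 3 * Real.sqrt 2 / Real.sqrt (1 + B) := by
      rw [le_div_iff₀ (by positivity)]
      have : Real.sqrt (1 + B) ≤ Real.sqrt 2 := Real.sqrt_le_sqrt (by linarith)
      nlinarith [Real.sqrt_nonneg (2:ℝ), Real.sq_sqrt (by norm_num : (0:ℝ) ≤ 2),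
        Real.sqrt_nonneg (1+B)]
    linarith [aux_g_integral_le]
  · -- large B: bound by Gaussian
    have hle : (∫ t in Set.Ioi (0 : ℝ), (1 + t ^ 2) ^ (-(3 / 4 : ℝ)) * Real.exp (-B * t ^ 2))
        ≤ ∫ t in Set.Ioi (0 : ℝ), Real.exp (-B * t ^ 2) := by
      apply integral_mono_of_nonneg hnonneg
        ((integrable_exp_neg_mul_sq (by linarith)).integrableOn)
      filter_upwards with t
      have := aux_g_le_one t
      nlinarith [Real.exp_nonneg (-B * t ^ 2)]
    rw [integral_gaussian_Ioi] at hle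
    have hBpos : (0:ℝ) < B := by linarith
    have key : Real.sqrt (π / B) / 2 ≤ 3 * Real.sqrt 2 / Real.sqrt (1 + B) := by
      rw [div_le_div_iff₀ (by norm_num) (by positivity)]
      have h1 : Real.sqrt (π / B) * Real.sqrt (1 + B) = Real.sqrt (π / B * (1 + B)) :=
        (Real.sqrt_mul (by positivity) _).symm
      rw [h1]
      have h2 : Real.sqrt (π / B * (1 + B)) ≤ Real.sqrt 8 := by
        apply Real.sqrt_le_sqrt
        rw [div_mul_eq_mul_div, div_le_iff₀ hBpos]
        nlinarith [Real.pi_le_four]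
      have h8 : Real.sqrt 8 = 2 * Real.sqrt 2 := by
        rw [show (8:ℝ) = 2^2 * 2 by norm_num, Real.sqrt_mul (by positivity),
          Real.sqrt_sq (by norm_num)]
      nlinarith [Real.sqrt_nonneg (2:ℝ)]
    linarith
end
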